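/- arXiv:1811.11576 — 3 statements merged into one kernel-verified Lean document; each statement's English description precedes it below -/
import Mathlib

section
/- The isoperimetric deficit satisfies 0 ≤ I₋₁ ≤ I₀^{1/2}. -/
open Real MeasureTheory

noncomputable section

/-- Scalar curvature `κ = f″ · ν` of the arc-length parametrized curve
`f = (f₁, f₂)`, where `ν = (−f₂′, f₁′)` is the inward unit normal. -/
def kappa (f₁ f₂ : ℝ → ℝ) (s : ℝ) : ℝ :=
  deriv (deriv f₁) s * (-(deriv f₂ s)) + deriv (deriv f₂) s * deriv f₁ s

/-- The deviation of curvature `κ̃ = κ − 2π/L`. -/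
def kappaDev (L : ℝ) (f₁ f₂ : ℝ → ℝ) (s : ℝ) : ℝ :=
  kappa f₁ f₂ s - 2 * π / L

/-- The scale-invariant quantity `I_ℓ = L^(2ℓ+1) ∫₀^L |κ̃^(ℓ)|² ds`. -/
def Iq (L : ℝ) (f₁ f₂ : ℝ → ℝ) (ℓ : ℕ) : ℝ :=
  L ^ (2 * ℓ + 1) * ∫ s in (0:ℝ)..L, (deriv^[ℓ] (kappaDev L f₁ f₂) s) ^ 2

/-- The signed area `A = −(1/2) ∫₀^L f · ν ds`. -/
def areaA (L : ℝ) (f₁ f₂ : ℝ → ℝ) : ℝ :=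
  -(1/2) * ∫ s in (0:ℝ)..L, (f₁ s * (-(deriv f₂ s)) + f₂ s * deriv f₁ s)

/-- The isoperimetric deficit `I₋₁ = 1 − 4πA/L²`. -/
def Im1 (L : ℝ) (f₁ f₂ : ℝ → ℝ) : ℝ :=
  1 - 4 * π * areaA L f₁ f₂ / L ^ 2

/-- A smooth closed plane curve of length `L > 0`, parametrized by arc length,
with rotation number `1`, i.e. `(1/(2π)) ∫₀^L κ ds = 1`. -/
def IsClosedCurve (L : ℝ) (f₁ f₂ : ℝ → ℝ) : Prop :=
  0 < L ∧ ContDiff ℝ (⊤ : ℕ∞) f₁ ∧ ContDiff ℝ (⊤ : ℕ∞) f₂ ∧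
  Function.Periodic f₁ L ∧ Function.Periodic f₂ L ∧
  (∀ s, (deriv f₁ s) ^ 2 + (deriv f₂ s) ^ 2 = 1) ∧
  (∫ s in (0:ℝ)..L, kappa f₁ f₂ s) = 2 * π

open intervalIntegral Complex AddCircle
open scoped ENNReal

lemma int_deriv_per {E : Type*} [NormedAddCommGroup E] [NormedSpace ℝ E] [CompleteSpace E]
    {L : ℝ} {u u' : ℝ → E} (h : ∀ s, HasDerivAt u (u' s) s) (hc : Continuous u')
    (hp : u L = u 0) : ∫ s in (0:ℝ)..L, u' s = 0 := by
  rw [integral_eq_sub_of_hasDerivAt (fun x _ => h x) (hc.intervalIntegrable _ _), hp, sub_self]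

lemma integral_cs {L : ℝ} (hL : 0 ≤ L) {u v : ℝ → ℝ} (hu : Continuous u) (hv : Continuous v) :
    (∫ s in (0:ℝ)..L, u s * v s) ^ 2
      ≤ (∫ s in (0:ℝ)..L, u s ^ 2) * (∫ s in (0:ℝ)..L, v s ^ 2) := by
  set B := ∫ s in (0:ℝ)..L, u s ^ 2 with hB
  set C := ∫ s in (0:ℝ)..L, v s ^ 2 with hC
  set D := ∫ s in (0:ℝ)..L, u s * v s with hD
  have key : ∀ t : ℝ, 0 ≤ B * (t * t) + (2 * D) * t + C := by
    intro t
    have h1 : ∫ s in (0:ℝ)..L, (t * u s + v s) ^ 2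
        = B * (t * t) + (2 * D) * t + C := by
      have e : (fun s => (t * u s + v s) ^ 2)
          = fun s => (t * t) * u s ^ 2 + ((2 * t) * (u s * v s) + v s ^ 2) := by
        funext s; ring
      rw [show (∫ s in (0:ℝ)..L, (t * u s + v s) ^ 2)
          = ∫ s in (0:ℝ)..L, ((t * t) * u s ^ 2 + ((2 * t) * (u s * v s) + v s ^ 2)) from by
            rw [e]]
      rw [intervalIntegral.integral_add, intervalIntegral.integral_add,
        intervalIntegral.integral_const_mul, intervalIntegral.integral_const_mul]
      · ring
      · exact (continuous_const.mul (hu.mul hv)).intervalIntegrable _ _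
      · exact ((hv.pow 2)).intervalIntegrable _ _
      · exact (continuous_const.mul (hu.pow 2)).intervalIntegrable _ _
      · exact ((continuous_const.mul (hu.mul hv)).add (hv.pow 2)).intervalIntegrable _ _
    rw [← h1]
    exact integral_nonneg hL (fun s _ => sq_nonneg _)
  have hd := discrim_le_zero key
  rw [discrim] at hd
  nlinarith [hd]

lemma periodic_deriv' {f : ℝ → ℝ} {c : ℝ} (h : Function.Periodic f c) :
    Function.Periodic (deriv f) c := by
  intro x
  rw [← deriv_comp_add_const]
  congr 1; funext y; exact h y

lemma wirtinger {L : ℝ} (hL : 0 < L) {x : ℝ → ℝ} (hx : ContDiff ℝ (⊤:ℕ∞) x)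
    (hper : Function.Periodic x L) (hmean : (∫ s in (0:ℝ)..L, x s) = 0) :
    (2*π/L)^2 * ∫ s in (0:ℝ)..L, x s ^ 2 ≤ ∫ s in (0:ℝ)..L, (deriv x s) ^ 2 := by
  haveI : Fact (0 < L) := ⟨hL⟩
  set g : ℝ → ℂ := fun s => (x s : ℂ) with hg
  set g' : ℝ → ℂ := fun s => ((deriv x s : ℝ) : ℂ) with hgd'
  have hxd : Differentiable ℝ x := hx.differentiable (by simp)
  have hxc' : Continuous (deriv x) := ((contDiff_infty_iff_deriv.mp hx).2).continuous
  have hgc : Continuous g := Complex.continuous_ofReal.comp hx.continuous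
  have hgc' : Continuous g' := Complex.continuous_ofReal.comp hxc'
  have hgd : ∀ s, HasDerivAt g (g' s) s := fun s => ((hxd s).hasDerivAt).ofReal_comp
  have hgper : Function.Periodic g L := fun s => by simp only [hg]; rw [hper s]
  have hg'per : Function.Periodic g' L := fun s => by
    simp only [hgd']; rw [periodic_deriv' hper s]
  have hGc : Continuous (hgper.lift : AddCircle L → ℂ) := hgc.quotient_liftOn' _
  have hG'c : Continuous (hg'per.lift : AddCircle L → ℂ) := hgc'.quotient_liftOn' _
  set G : C(AddCircle L, ℂ) := ⟨hgper.lift, hGc⟩ with hGdef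
  set G' : C(AddCircle L, ℂ) := ⟨hg'per.lift, hG'c⟩ with hG'def
  have hGco : ∀ s : ℝ, G (s : AddCircle L) = g s := fun s => hgper.lift_coe s
  have hG'co : ∀ s : ℝ, G' (s : AddCircle L) = g' s := fun s => hg'per.lift_coe s
  -- Fourier coefficients
  set c : ℤ → ℂ := fun n => fourierCoeff (G : AddCircle L → ℂ) n with hcdef
  set c' : ℤ → ℂ := fun n => fourierCoeff (G' : AddCircle L → ℂ) n with hc'def
  have hcint : ∀ n, c n = (1/L : ℝ) • ∫ s in (0:ℝ)..L, fourier (-n) (s : AddCircle L) • g s := by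
    intro n
    show fourierCoeff (⇑G) n = _
    rw [fourierCoeff_eq_intervalIntegral (G : AddCircle L → ℂ) n 0]
    simp only [zero_add, hGco]
  have hc'int : ∀ n, c' n = (1/L : ℝ) • ∫ s in (0:ℝ)..L, fourier (-n) (s : AddCircle L) • g' s := by
    intro n
    show fourierCoeff (⇑G') n = _
    rw [fourierCoeff_eq_intervalIntegral (G' : AddCircle L → ℂ) n 0]
    simp only [zero_add, hG'co]
  -- c 0 = 0
  have hc0 : c 0 = 0 := by
    rw [hcint 0]
    have : ∫ s in (0:ℝ)..L, fourier (-(0:ℤ)) (s : AddCircle L) • g s = ∫ s in (0:ℝ)..L, g s := by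
      congr 1; funext s; rw [neg_zero, fourier_zero, one_smul]
    rw [this, hg]
    rw [intervalIntegral.integral_ofReal, hmean]
    simp
  -- derivative relation for integrals
  have hIrel : ∀ n : ℤ, (∫ s in (0:ℝ)..L, fourier (-n) (s : AddCircle L) * g' s)
      = (2 * ↑π * Complex.I * n / L) * ∫ s in (0:ℝ)..L, fourier (-n) (s : AddCircle L) * g s := by
    intro n
    have hfc : Continuous fun s : ℝ => (fourier (-n) (s : AddCircle L) : ℂ) :=
      (map_continuous (fourier (-n))).comp (AddCircle.continuous_mk' L)
    have hu : ∀ s : ℝ, HasDerivAt (fun y : ℝ => fourier (-n) (y : AddCircle L) * g y)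
        ((-2 * ↑π * Complex.I * n / L) * (fourier (-n) (s : AddCircle L) * g s)
          + fourier (-n) (s : AddCircle L) * g' s) s := by
      intro s
      have := (hasDerivAt_fourier_neg L n s).mul (hgd s)
      simp only [mul_assoc] at this ⊢; exact this
    have hcont : Continuous fun s : ℝ =>
        (-2 * ↑π * Complex.I * n / L) * (fourier (-n) (s : AddCircle L) * g s)
          + fourier (-n) (s : AddCircle L) * g' s :=
      (continuous_const.mul (hfc.mul hgc)).add (hfc.mul hgc')
    have hper0 : (fun y : ℝ => fourier (-n) (y : AddCircle L) * g y) L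
        = (fun y : ℝ => fourier (-n) (y : AddCircle L) * g y) 0 := by
      have hcoe : ((L : ℝ) : AddCircle L) = ((0 : ℝ) : AddCircle L) := by
        simpa using (AddCircle.coe_add_period L 0)
      have hgL : g L = g 0 := by simpa using (hgper 0)
      simp only [hcoe, hgL]
    have h0 := int_deriv_per hu hcont hper0
    rw [intervalIntegral.integral_add
        ((continuous_const.fun_mul (hfc.fun_mul hgc)).intervalIntegrable _ _)
        ((hfc.fun_mul hgc').intervalIntegrable _ _),
      intervalIntegral.integral_const_mul] at h0
    have hLne : (L : ℂ) ≠ 0 := by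
      exact_mod_cast ne_of_gt hL
    field_simp at h0 ⊢
    linear_combination h0
  -- coefficient relation
  have hc'c : ∀ n : ℤ, c' n = (2 * ↑π * Complex.I * n / L) * c n := by
    intro n
    rw [hcint n, hc'int n]
    simp only [smul_eq_mul]
    rw [Complex.real_smul, Complex.real_smul, hIrel n]
    push_cast
    ring
  -- term-wise norm inequality
  have hterm : ∀ n : ℤ, (2*π/L)^2 * ‖c n‖^2 ≤ ‖c' n‖^2 := by
    intro n
    rcases eq_or_ne n 0 with rfl | hn
    · rw [hc0]
      simp
    · have hnorm : ‖c' n‖ = (2 * π * |(n:ℝ)| / L) * ‖c n‖ := by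
        rw [hc'c n, norm_mul]
        congr 1
        rw [norm_div, norm_mul, norm_mul, norm_mul]
        simp [abs_of_pos Real.pi_pos, abs_of_pos hL]
      have hn1 : (1:ℝ) ≤ |(n:ℝ)| := by
        rw [← Int.cast_abs]
        exact_mod_cast Int.one_le_abs hn
      have h1 : (2*π/L) ≤ 2 * π * |(n:ℝ)| / L := by
        have h2n : (2*π) ≤ 2 * π * |(n:ℝ)| := by nlinarith [Real.pi_pos]
        gcongr
      have h2 : (0:ℝ) ≤ 2*π/L := by positivity
      rw [hnorm, mul_pow]
      have := pow_le_pow_left₀ h2 h1 2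
      exact mul_le_mul_of_nonneg_right this (sq_nonneg _)
  -- Parseval for G and G'
  set Gto : Lp ℂ 2 (@haarAddCircle L (Fact.mk hL)) := ContinuousMap.toLp (E := ℂ) 2 haarAddCircle ℂ G with hGtodef
  set Gto' := ContinuousMap.toLp (E := ℂ) 2 haarAddCircle ℂ G' with hGto2def
  have hParseval : ∀ (H : C(AddCircle L, ℂ)) (u : ℝ → ℝ),
      (∀ s : ℝ, H (s : AddCircle L) = (u s : ℂ)) →
      L * ∑' n : ℤ, ‖fourierCoeff (⇑H) n‖^2 = ∫ s in (0:ℝ)..L, u s ^ 2 := by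
    intro H u hHu
    have hp := tsum_sq_fourierCoeff (ContinuousMap.toLp (E := ℂ) 2 haarAddCircle ℂ H)
    have hcoef : ∀ n : ℤ, fourierCoeff (⇑(ContinuousMap.toLp (E := ℂ) 2 haarAddCircle ℂ H)) n
        = fourierCoeff (⇑H) n := fun n => fourierCoeff_toLp H n
    simp only [hcoef] at hp
    have hae : ∫ t, ‖(ContinuousMap.toLp (E := ℂ) 2 haarAddCircle ℂ H) t‖^2 ∂haarAddCircle
        = ∫ t, ‖H t‖^2 ∂haarAddCircle := by
      apply MeasureTheory.integral_congr_ae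
      filter_upwards [ContinuousMap.coeFn_toLp (p := 2) (μ := haarAddCircle) (𝕜 := ℂ) H] with t ht
      rw [ht]
    have hvol : ∫ t, ‖H t‖^2 ∂(volume : Measure (AddCircle L))
        = L * ∫ t, ‖H t‖^2 ∂haarAddCircle := by
      rw [volume_eq_smul_haarAddCircle, MeasureTheory.integral_smul_measure, ENNReal.toReal_ofReal hL.le,
        smul_eq_mul]
    have hpre : ∫ s in (0:ℝ)..L, u s ^ 2 = ∫ t, ‖H t‖^2 ∂(volume : Measure (AddCircle L)) := by
      have h3 := AddCircle.intervalIntegral_preimage L 0 (fun t => ‖H t‖^2)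
      rw [zero_add] at h3
      rw [← h3]
      congr 1
      funext s
      rw [hHu s]
      simp [_root_.sq_abs]
    rw [hp, hae] at *
    rw [hpre, hvol, hae]
  have hPg := hParseval G x hGco
  have hPg' := hParseval G' (deriv x) hG'co
  -- summability
  have hsummable : ∀ (F : Lp ℂ 2 (@haarAddCircle L (Fact.mk hL))),
      Summable fun n : ℤ => ‖fourierCoeff (⇑F) n‖ ^ 2 := by
    intro F
    have hm := lp.memℓp (fourierBasis.repr F)
    rw [memℓp_gen_iff (by norm_num)] at hm
    apply Summable.congr _ ?_
    · exact fun n : ℤ => ‖fourierBasis.repr F n‖ ^ ((2:ℝ≥0∞).toReal)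
    · exact hm
    · intro n
      rw [fourierBasis_repr]
      norm_num
  have hsum : Summable fun n : ℤ => ‖c n‖^2 := by
    have := hsummable Gto
    apply this.congr
    intro n
    rw [hGtodef]
    show ‖fourierCoeff (⇑(ContinuousMap.toLp (E := ℂ) 2 haarAddCircle ℂ G)) n‖^2 = ‖c n‖^2
    rw [fourierCoeff_toLp]
  have hsum' : Summable fun n : ℤ => ‖c' n‖^2 := by
    have := hsummable Gto'
    apply this.congr
    intro n
    rw [hGto2def]
    show ‖fourierCoeff (⇑(ContinuousMap.toLp (E := ℂ) 2 haarAddCircle ℂ G')) n‖^2 = ‖c' n‖^2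
    rw [fourierCoeff_toLp]
  -- combine
  have hle : ∑' n : ℤ, (2*π/L)^2 * ‖c n‖^2 ≤ ∑' n : ℤ, ‖c' n‖^2 :=
    Summable.tsum_le_tsum hterm (hsum.mul_left _) hsum'
  rw [tsum_mul_left] at hle
  have : (2*π/L)^2 * ∫ s in (0:ℝ)..L, x s ^ 2
      = L * ((2*π/L)^2 * ∑' n : ℤ, ‖c n‖^2) := by
    rw [← hPg]; ring
  rw [this, ← hPg']
  exact mul_le_mul_of_nonneg_left hle hL.le

set_option maxHeartbeats 1600000 in
/-- The isoperimetric deficit satisfies `0 ≤ I₋₁ ≤ I₀^{1/2}`. -/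
theorem stmt_2 (L : ℝ) (f₁ f₂ : ℝ → ℝ) (h : IsClosedCurve L f₁ f₂) :
    0 ≤ Im1 L f₁ f₂ ∧ Im1 L f₁ f₂ ≤ Real.sqrt (Iq L f₁ f₂ 0) := by
  obtain ⟨hL, hf1, hf2, hp1, hp2, hunit, hrot⟩ := h
  have hLne : L ≠ 0 := ne_of_gt hL
  have hf1d : Differentiable ℝ f₁ := hf1.differentiable (by simp)
  have hf2d : Differentiable ℝ f₂ := hf2.differentiable (by simp)
  have hd1s : ContDiff ℝ (⊤:ℕ∞) (deriv f₁) := (contDiff_infty_iff_deriv.mp hf1).2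
  have hd2s : ContDiff ℝ (⊤:ℕ∞) (deriv f₂) := (contDiff_infty_iff_deriv.mp hf2).2
  have hd1d : Differentiable ℝ (deriv f₁) := hd1s.differentiable (by simp)
  have hd2d : Differentiable ℝ (deriv f₂) := hd2s.differentiable (by simp)
  have hd1c : Continuous (deriv f₁) := hd1s.continuous
  have hd2c : Continuous (deriv f₂) := hd2s.continuous
  have hdd1c : Continuous (deriv (deriv f₁)) := ((contDiff_infty_iff_deriv.mp hd1s).2).continuous
  have hdd2c : Continuous (deriv (deriv f₂)) := ((contDiff_infty_iff_deriv.mp hd2s).2).continuous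
  have hf1c : Continuous f₁ := hf1.continuous
  have hf2c : Continuous f₂ := hf2.continuous
  have hf1L : f₁ L = f₁ 0 := by simpa using hp1 0
  have hf2L : f₂ L = f₂ 0 := by simpa using hp2 0
  have hpd1 : Function.Periodic (deriv f₁) L := periodic_deriv' hp1
  have hpd2 : Function.Periodic (deriv f₂) L := periodic_deriv' hp2
  have hd1L : deriv f₁ L = deriv f₁ 0 := by simpa using hpd1 0
  have hd2L : deriv f₂ L = deriv f₂ 0 := by simpa using hpd2 0
  -- orthogonality of velocity and acceleration
  have horth : ∀ s, deriv f₁ s * deriv (deriv f₁) s + deriv f₂ s * deriv (deriv f₂) s = 0 := by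
    intro s
    have hC : (fun t => (deriv f₁ t)^2 + (deriv f₂ t)^2) = (fun _ => (1:ℝ)) := funext hunit
    have h1 : HasDerivAt (fun t => (deriv f₁ t)^2)
        (2 * deriv f₁ s * deriv (deriv f₁) s) s := by
      have := ((hd1d s).hasDerivAt).pow 2
      norm_num at this
      exact this
    have h2 : HasDerivAt (fun t => (deriv f₂ t)^2)
        (2 * deriv f₂ s * deriv (deriv f₂) s) s := by
      have := ((hd2d s).hasDerivAt).pow 2
      norm_num at this
      exact this
    have hD := h1.add h2
    have h0 : HasDerivAt (fun t => (deriv f₁ t)^2 + (deriv f₂ t)^2) 0 s := by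
      rw [hC]; exact hasDerivAt_const s 1
    have := hD.unique h0
    linarith
  -- basic integrals of derivatives vanish
  have hd1int : (∫ s in (0:ℝ)..L, deriv f₁ s) = 0 :=
    int_deriv_per (fun s => (hf1d s).hasDerivAt) hd1c hf1L
  have hd2int : (∫ s in (0:ℝ)..L, deriv f₂ s) = 0 :=
    int_deriv_per (fun s => (hf2d s).hasDerivAt) hd2c hf2L
  -- total length identity
  have hsplitLen : (∫ s in (0:ℝ)..L, (deriv f₁ s)^2) + (∫ s in (0:ℝ)..L, (deriv f₂ s)^2) = L := by
    rw [← intervalIntegral.integral_add ((hd1c.fun_pow 2).intervalIntegrable _ _)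
      ((hd2c.fun_pow 2).intervalIntegrable _ _)]
    rw [intervalIntegral.integral_congr (g := fun _ => (1:ℝ)) (fun s _ => hunit s)]
    simp
  set A := areaA L f₁ f₂ with hA
  ------------------------------------------------------------------
  -- PART 1 : isoperimetric inequality 0 ≤ Im1
  ------------------------------------------------------------------
  set m := (∫ s in (0:ℝ)..L, f₁ s) / L with hm
  set xx : ℝ → ℝ := fun s => f₁ s - m with hxx
  have hxxd : ∀ s, HasDerivAt xx (deriv f₁ s) s := fun s => ((hf1d s).hasDerivAt).sub_const m
  have hxxc : Continuous xx := hf1c.sub continuous_const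
  have hxxs : ContDiff ℝ (⊤:ℕ∞) xx := hf1.sub contDiff_const
  have hxxper : Function.Periodic xx L := fun s => by
    simp only [hxx]; rw [hp1 s]
  have hxxderiv : deriv xx = deriv f₁ := funext fun s => (hxxd s).deriv
  have hxxmean : (∫ s in (0:ℝ)..L, xx s) = 0 := by
    simp only [hxx]
    rw [intervalIntegral.integral_sub (hf1c.intervalIntegrable _ _)
      (intervalIntegrable_const), intervalIntegral.integral_const]
    simp only [hm, smul_eq_mul, sub_zero]
    field_simp
    simp
  have hwir : (2*π/L)^2 * ∫ s in (0:ℝ)..L, xx s ^ 2 ≤ ∫ s in (0:ℝ)..L, (deriv f₁ s)^2 := by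
    have := wirtinger hL hxxs hxxper hxxmean
    rwa [hxxderiv] at this
  have hparts : (∫ s in (0:ℝ)..L, (deriv f₁ s * f₂ s + xx s * deriv f₂ s)) = 0 := by
    apply int_deriv_per (u := fun s => xx s * f₂ s)
    · exact fun s => (hxxd s).mul ((hf2d s).hasDerivAt)
    · exact (hd1c.mul hf2c).add (hxxc.mul hd2c)
    · have h1 : xx L = xx 0 := by simpa using hxxper 0
      simp [h1, hf2L]
  have hAeq : A = ∫ s in (0:ℝ)..L, xx s * deriv f₂ s := by
    rw [hA]
    unfold areaA
    have hsplit : Set.EqOn (fun s => f₁ s * (-(deriv f₂ s)) + f₂ s * deriv f₁ s)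
        (fun s => (-2) * (xx s * deriv f₂ s)
          + ((deriv f₁ s * f₂ s + xx s * deriv f₂ s) + (-m) * deriv f₂ s))
        (Set.uIcc (0:ℝ) L) := by
      intro s _
      simp only [hxx]
      ring
    rw [intervalIntegral.integral_congr hsplit]
    rw [intervalIntegral.integral_add
        ((continuous_const.fun_mul (hxxc.fun_mul hd2c)).intervalIntegrable _ _)
        ((((hd1c.fun_mul hf2c).fun_add (hxxc.fun_mul hd2c)).fun_add
          (continuous_const.fun_mul hd2c)).intervalIntegrable _ _),
      intervalIntegral.integral_add
        (((hd1c.fun_mul hf2c).fun_add (hxxc.fun_mul hd2c)).intervalIntegrable _ _)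
        ((continuous_const.fun_mul hd2c).intervalIntegrable _ _),
      intervalIntegral.integral_const_mul, intervalIntegral.integral_const_mul,
      hparts, hd2int]
    ring
  -- expansion of the completed square
  have hexp : ∫ s in (0:ℝ)..L, (deriv f₂ s - (2*π/L) * xx s)^2
      = (∫ s in (0:ℝ)..L, (deriv f₂ s)^2) - (4*π/L) * (∫ s in (0:ℝ)..L, xx s * deriv f₂ s)
        + (2*π/L)^2 * (∫ s in (0:ℝ)..L, xx s ^ 2) := by
    have hsplit : Set.EqOn (fun s => (deriv f₂ s - (2*π/L) * xx s)^2)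
        (fun s => (deriv f₂ s)^2 + ((-(4*π/L)) * (xx s * deriv f₂ s)
          + (2*π/L)^2 * (xx s ^ 2))) (Set.uIcc (0:ℝ) L) := by
      intro s _
      ring
    rw [intervalIntegral.integral_congr hsplit,
      intervalIntegral.integral_add ((hd2c.fun_pow 2).intervalIntegrable _ _)
        (((continuous_const.fun_mul (hxxc.fun_mul hd2c)).fun_add
          (continuous_const.fun_mul (hxxc.fun_pow 2))).intervalIntegrable _ _),
      intervalIntegral.integral_add
        ((continuous_const.fun_mul (hxxc.fun_mul hd2c)).intervalIntegrable _ _)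
        ((continuous_const.fun_mul (hxxc.fun_pow 2)).intervalIntegrable _ _),
      intervalIntegral.integral_const_mul, intervalIntegral.integral_const_mul]
    ring
  have hsqnn : 0 ≤ ∫ s in (0:ℝ)..L, (deriv f₂ s - (2*π/L) * xx s)^2 :=
    intervalIntegral.integral_nonneg hL.le (fun s _ => sq_nonneg _)
  have hkey : 0 ≤ L - 4*π/L * A := by
    rw [hexp] at hsqnn
    rw [hAeq]
    linarith [hwir, hsplitLen, hsqnn]
  have hIm1eq : Im1 L f₁ f₂ = (L - 4*π/L * A) / L := by
    unfold Im1
    rw [← hA]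
    field_simp
  have part1 : 0 ≤ Im1 L f₁ f₂ := by
    rw [hIm1eq]
    exact div_nonneg hkey hL.le
  ------------------------------------------------------------------
  -- PART 2 : Im1 ≤ sqrt (Iq 0)
  ------------------------------------------------------------------
  set P : ℝ → ℝ := fun s => (f₁ s - f₁ 0) * (-(deriv f₂ s)) + (f₂ s - f₂ 0) * deriv f₁ s
    with hPdef
  have hPc : Continuous P := by
    apply Continuous.add
    · exact (hf1c.sub continuous_const).mul hd2c.neg
    · exact (hf2c.sub continuous_const).mul hd1c
  -- FTC representation of the displacement
  have hg1 : ∀ s : ℝ, f₁ s - f₁ 0 = ∫ t in (0:ℝ)..s, deriv f₁ t := fun s =>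
    (intervalIntegral.integral_eq_sub_of_hasDerivAt
      (fun t _ => (hf1d t).hasDerivAt) (hd1c.intervalIntegrable _ _)).symm
  have hg2 : ∀ s : ℝ, f₂ s - f₂ 0 = ∫ t in (0:ℝ)..s, deriv f₂ t := fun s =>
    (intervalIntegral.integral_eq_sub_of_hasDerivAt
      (fun t _ => (hf2d t).hasDerivAt) (hd2c.intervalIntegrable _ _)).symm
  -- bound on the displacement
  have hgbound : ∀ s : ℝ, 0 ≤ s → (f₁ s - f₁ 0)^2 + (f₂ s - f₂ 0)^2 ≤ s^2 := by
    intro s hs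
    set a := f₁ s - f₁ 0 with ha
    set b := f₂ s - f₂ 0 with hb
    set r := Real.sqrt (a^2 + b^2) with hr
    have hrnn : 0 ≤ r := Real.sqrt_nonneg _
    have hr2 : r^2 = a^2 + b^2 := Real.sq_sqrt (by positivity)
    have hint : a^2 + b^2 = ∫ t in (0:ℝ)..s, (a * deriv f₁ t + b * deriv f₂ t) := by
      rw [intervalIntegral.integral_add ((continuous_const.fun_mul hd1c).intervalIntegrable _ _)
          ((continuous_const.fun_mul hd2c).intervalIntegrable _ _),
        intervalIntegral.integral_const_mul, intervalIntegral.integral_const_mul,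
        ← hg1 s, ← hg2 s, ← ha, ← hb]
      ring
    have hptw : ∀ t ∈ Set.Icc (0:ℝ) s, a * deriv f₁ t + b * deriv f₂ t ≤ r := by
      intro t _
      have h1 : (a * deriv f₁ t + b * deriv f₂ t)^2 ≤ a^2 + b^2 := by
        nlinarith [hunit t, sq_nonneg (a * deriv f₂ t - b * deriv f₁ t)]
      calc a * deriv f₁ t + b * deriv f₂ t
          ≤ |a * deriv f₁ t + b * deriv f₂ t| := le_abs_self _
        _ = Real.sqrt ((a * deriv f₁ t + b * deriv f₂ t)^2) := (Real.sqrt_sq_eq_abs _).symm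
        _ ≤ r := Real.sqrt_le_sqrt h1
    have hle : a^2 + b^2 ≤ s * r := by
      rw [hint]
      calc (∫ t in (0:ℝ)..s, (a * deriv f₁ t + b * deriv f₂ t))
          ≤ ∫ _t in (0:ℝ)..s, r :=
            intervalIntegral.integral_mono_on hs
              (((continuous_const.mul hd1c).add (continuous_const.mul hd2c)).intervalIntegrable _ _)
              intervalIntegrable_const hptw
        _ = s * r := by rw [intervalIntegral.integral_const]; simp
    nlinarith [hr2, hrnn, hle, sq_nonneg (r - s)]
  have hPbound : ∀ s ∈ Set.Icc (0:ℝ) L, (P s)^2 ≤ L^2 := by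
    intro s hs
    have h1 := hgbound s hs.1
    have hsL : s^2 ≤ L^2 := by nlinarith [hs.1, hs.2]
    have hcs2 : (P s)^2 ≤ (f₁ s - f₁ 0)^2 + (f₂ s - f₂ 0)^2 := by
      simp only [hPdef]
      nlinarith [hunit s, sq_nonneg ((f₁ s - f₁ 0) * deriv f₁ s + (f₂ s - f₂ 0) * deriv f₂ s)]
    linarith
  -- integration by parts : ∫ κ P = -L
  have hparts2 : (∫ s in (0:ℝ)..L,
      (((deriv f₁ s)^2 + (f₁ s - f₁ 0) * deriv (deriv f₁) s)
        + ((deriv f₂ s)^2 + (f₂ s - f₂ 0) * deriv (deriv f₂) s))) = 0 := by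
    apply int_deriv_per
      (u := fun s => (f₁ s - f₁ 0) * deriv f₁ s + (f₂ s - f₂ 0) * deriv f₂ s)
    · intro s
      have := ((((hf1d s).hasDerivAt).sub_const (f₁ 0)).mul ((hd1d s).hasDerivAt)).add
        ((((hf2d s).hasDerivAt).sub_const (f₂ 0)).mul ((hd2d s).hasDerivAt))
      convert this using 1
      · rfl
      · ring
    · apply Continuous.add
      · exact (hd1c.pow 2).add ((hf1c.sub continuous_const).mul hdd1c)
      · exact (hd2c.pow 2).add ((hf2c.sub continuous_const).mul hdd2c)
    · simp [hf1L, hf2L, hd1L, hd2L]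
  have hkP : (∫ s in (0:ℝ)..L, kappa f₁ f₂ s * P s) = -L := by
    have hpoint : Set.EqOn (fun s => kappa f₁ f₂ s * P s)
        (fun s => (((deriv f₁ s)^2 + (f₁ s - f₁ 0) * deriv (deriv f₁) s)
          + ((deriv f₂ s)^2 + (f₂ s - f₂ 0) * deriv (deriv f₂) s))
          - ((deriv f₁ s)^2 + (deriv f₂ s)^2)) (Set.uIcc (0:ℝ) L) := by
      intro s _
      have h1 := hunit s
      have h2 := horth s
      simp only [hPdef]
      unfold kappa
      linear_combination ((f₁ s - f₁ 0) * deriv (deriv f₁) s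
          + (f₂ s - f₂ 0) * deriv (deriv f₂) s) * h1
        + (-(f₁ s - f₁ 0) * deriv f₁ s - (f₂ s - f₂ 0) * deriv f₂ s) * h2
    rw [intervalIntegral.integral_congr hpoint,
      intervalIntegral.integral_sub
        ((((hd1c.fun_pow 2).fun_add ((hf1c.fun_sub continuous_const).fun_mul hdd1c)).fun_add
          ((hd2c.fun_pow 2).fun_add ((hf2c.fun_sub continuous_const).fun_mul hdd2c))).intervalIntegrable _ _)
        (((hd1c.fun_pow 2).fun_add (hd2c.fun_pow 2)).intervalIntegrable _ _),
      hparts2,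
      intervalIntegral.integral_add ((hd1c.fun_pow 2).intervalIntegrable _ _)
        ((hd2c.fun_pow 2).intervalIntegrable _ _), hsplitLen]
    ring
  have hintP : (∫ s in (0:ℝ)..L, P s) = -2 * A := by
    have hpoint : Set.EqOn P (fun s => (f₁ s * (-(deriv f₂ s)) + f₂ s * deriv f₁ s)
        + (f₁ 0 * deriv f₂ s + (-(f₂ 0)) * deriv f₁ s)) (Set.uIcc (0:ℝ) L) := by
      intro s _
      simp only [hPdef]
      ring
    have hAint : (∫ s in (0:ℝ)..L, (f₁ s * (-(deriv f₂ s)) + f₂ s * deriv f₁ s)) = -2 * A := by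
      rw [hA]
      unfold areaA
      ring
    rw [intervalIntegral.integral_congr hpoint,
      intervalIntegral.integral_add
        (((hf1c.fun_mul hd2c.fun_neg).fun_add (hf2c.fun_mul hd1c)).intervalIntegrable _ _)
        (((continuous_const.fun_mul hd2c).fun_add (continuous_const.fun_mul hd1c)).intervalIntegrable _ _),
      intervalIntegral.integral_add
        ((continuous_const.fun_mul hd2c).intervalIntegrable _ _)
        ((continuous_const.fun_mul hd1c).intervalIntegrable _ _),
      intervalIntegral.integral_const_mul, intervalIntegral.integral_const_mul,
      hd1int, hd2int, hAint]
    ring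
  have hkdc : Continuous (kappaDev L f₁ f₂) := by
    unfold kappaDev kappa
    exact ((hdd1c.mul hd2c.neg).add (hdd2c.mul hd1c)).sub continuous_const
  have hkc : Continuous (kappa f₁ f₂) := by
    unfold kappa
    exact (hdd1c.mul hd2c.neg).add (hdd2c.mul hd1c)
  have hkdP : (∫ s in (0:ℝ)..L, kappaDev L f₁ f₂ s * P s) = -(L - 4*π/L * A) := by
    have hpoint : Set.EqOn (fun s => kappaDev L f₁ f₂ s * P s)
        (fun s => kappa f₁ f₂ s * P s - (2*π/L) * P s) (Set.uIcc (0:ℝ) L) := by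
      intro s _
      unfold kappaDev
      ring
    rw [intervalIntegral.integral_congr hpoint,
      intervalIntegral.integral_sub ((hkc.fun_mul hPc).intervalIntegrable _ _)
        ((continuous_const.fun_mul hPc).intervalIntegrable _ _),
      intervalIntegral.integral_const_mul, hkP, hintP]
    field_simp
    ring
  -- Cauchy-Schwarz and the sup bound on P
  have hcs := integral_cs hL.le (u := kappaDev L f₁ f₂) (v := P) hkdc hPc
  have hPP : (∫ s in (0:ℝ)..L, (P s)^2) ≤ L^2 * L := by
    calc (∫ s in (0:ℝ)..L, (P s)^2) ≤ ∫ _s in (0:ℝ)..L, L^2 := by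
          apply intervalIntegral.integral_mono_on hL.le
            ((hPc.pow 2).intervalIntegrable _ _) intervalIntegrable_const hPbound
      _ = L^2 * L := by rw [intervalIntegral.integral_const]; simp; ring
  have hkd2nn : 0 ≤ ∫ s in (0:ℝ)..L, (kappaDev L f₁ f₂ s)^2 :=
    intervalIntegral.integral_nonneg hL.le (fun s _ => sq_nonneg _)
  have hfinal : (L - 4*π/L * A)^2 ≤ (∫ s in (0:ℝ)..L, (kappaDev L f₁ f₂ s)^2) * (L^2 * L) := by
    have h1 : (L - 4*π/L * A)^2 = (∫ s in (0:ℝ)..L, kappaDev L f₁ f₂ s * P s)^2 := by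
      rw [hkdP]; ring
    rw [h1]
    calc (∫ s in (0:ℝ)..L, kappaDev L f₁ f₂ s * P s)^2
        ≤ (∫ s in (0:ℝ)..L, (kappaDev L f₁ f₂ s)^2) * (∫ s in (0:ℝ)..L, (P s)^2) := hcs
      _ ≤ (∫ s in (0:ℝ)..L, (kappaDev L f₁ f₂ s)^2) * (L^2 * L) :=
          mul_le_mul_of_nonneg_left hPP hkd2nn
  have hIq : Iq L f₁ f₂ 0 = L * ∫ s in (0:ℝ)..L, (kappaDev L f₁ f₂ s)^2 := by
    unfold Iq
    simp
  have hsq2 : (Im1 L f₁ f₂)^2 ≤ Iq L f₁ f₂ 0 := by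
    rw [hIm1eq, hIq, div_pow]
    rw [div_le_iff₀ (by positivity)]
    calc (L - 4*π/L * A)^2 ≤ (∫ s in (0:ℝ)..L, (kappaDev L f₁ f₂ s)^2) * (L^2 * L) := hfinal
      _ = L * (∫ s in (0:ℝ)..L, (kappaDev L f₁ f₂ s)^2) * L^2 := by ring
  have hIqnn : 0 ≤ Iq L f₁ f₂ 0 := by
    rw [hIq]
    exact mul_nonneg hL.le hkd2nn
  exact ⟨part1, (Real.le_sqrt part1 hIqnn).mpr hsq2⟩
end
end

section
/- The isoperimetric deficit admits the integral representation I₋₁ = (L² − 4πA)/L² = −(1/L) ∫₀^L κ̃(s) (f(s) · ν(s)) ds = −(1/L) ∫₀^L κ̃(s) ( f(s)·ν(s) − (1/L)∫₀^L f·ν ds ) ds. -/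
open Real MeasureTheory

noncomputable section

/-- Integral representation of the isoperimetric deficit:
`I₋₁ = (L² − 4πA)/L² = −(1/L) ∫₀^L κ̃ (f·ν) ds
     = −(1/L) ∫₀^L κ̃ (f·ν − (1/L)∫₀^L f·ν ds) ds`. -/
theorem stmt_3 (L : ℝ) (f₁ f₂ : ℝ → ℝ) (h : IsClosedCurve L f₁ f₂) :
    Im1 L f₁ f₂ = (L ^ 2 - 4 * π * areaA L f₁ f₂) / L ^ 2 ∧
    Im1 L f₁ f₂ =
      -(1 / L) * ∫ s in (0:ℝ)..L,
        kappaDev L f₁ f₂ s * (f₁ s * (-(deriv f₂ s)) + f₂ s * deriv f₁ s) ∧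
    Im1 L f₁ f₂ =
      -(1 / L) * ∫ s in (0:ℝ)..L,
        kappaDev L f₁ f₂ s *
          ((f₁ s * (-(deriv f₂ s)) + f₂ s * deriv f₁ s) -
            (1 / L) * ∫ u in (0:ℝ)..L, (f₁ u * (-(deriv f₂ u)) + f₂ u * deriv f₁ u)) := by
  obtain ⟨hL, hf₁, hf₂, hp₁, hp₂, hunit, hrot⟩ := h
  have hone : (1:ℕ∞) ≤ (⊤:ℕ∞) := le_top
  have hL0 : L ≠ 0 := hL.ne'
  -- differentiability facts
  have hd₁ : Differentiable ℝ f₁ := hf₁.differentiable (by simp)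
  have hd₂ : Differentiable ℝ f₂ := hf₂.differentiable (by simp)
  have hcd₁ : ContDiff ℝ (⊤ : ℕ∞) (deriv f₁) := (contDiff_infty_iff_deriv.mp hf₁).2
  have hcd₂ : ContDiff ℝ (⊤ : ℕ∞) (deriv f₂) := (contDiff_infty_iff_deriv.mp hf₂).2
  have hdd₁ : Differentiable ℝ (deriv f₁) := hcd₁.differentiable (by simp)
  have hdd₂ : Differentiable ℝ (deriv f₂) := hcd₂.differentiable (by simp)
  have hc₁ : Continuous f₁ := hf₁.continuous
  have hc₂ : Continuous f₂ := hf₂.continuous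
  have hcD₁ : Continuous (deriv f₁) := hcd₁.continuous
  have hcD₂ : Continuous (deriv f₂) := hcd₂.continuous
  have hcDD₁ : Continuous (deriv (deriv f₁)) := (contDiff_infty_iff_deriv.mp hcd₁).2.continuous
  have hcDD₂ : Continuous (deriv (deriv f₂)) := (contDiff_infty_iff_deriv.mp hcd₂).2.continuous
  -- orthogonality f'·f'' = 0
  have horth : ∀ s : ℝ, deriv f₁ s * deriv (deriv f₁) s + deriv f₂ s * deriv (deriv f₂) s = 0 := by
    intro s
    have h1 : HasDerivAt (fun t => (deriv f₁ t) ^ 2 + (deriv f₂ t) ^ 2)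
        (2 * deriv f₁ s * deriv (deriv f₁) s + 2 * deriv f₂ s * deriv (deriv f₂) s) s := by
      have := (((hdd₁ s).hasDerivAt.pow 2).add ((hdd₂ s).hasDerivAt.pow 2))
      exact this.congr_deriv (by ring)
    have h2 : HasDerivAt (fun t => (deriv f₁ t) ^ 2 + (deriv f₂ t) ^ 2) 0 s := by
      have heq : (fun t => (deriv f₁ t) ^ 2 + (deriv f₂ t) ^ 2) = fun _ => (1:ℝ) :=
        funext hunit
      rw [heq]; exact hasDerivAt_const s 1
    have := h1.unique h2
    linarith
  -- the key derivative computation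
  set g : ℝ → ℝ := fun s => f₁ s * (-(deriv f₂ s)) + f₂ s * deriv f₁ s with hg
  have hgc : Continuous g := by fun_prop
  have hkc : Continuous (kappa f₁ f₂) := by
    unfold kappa; fun_prop
  have hkdc : Continuous (kappaDev L f₁ f₂) := by
    unfold kappaDev; exact hkc.sub continuous_const
  have hG : ∀ s : ℝ, HasDerivAt (fun t => f₁ t * deriv f₁ t + f₂ t * deriv f₂ t)
      (1 + kappa f₁ f₂ s * g s) s := by
    intro s
    have h1 := ((hd₁ s).hasDerivAt.mul (hdd₁ s).hasDerivAt).add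
      ((hd₂ s).hasDerivAt.mul (hdd₂ s).hasDerivAt)
    refine h1.congr_deriv (Eq.symm ?_)
    have e1 := hunit s
    have e2 := horth s
    simp only [hg, kappa]
    linear_combination (f₁ s * deriv (deriv f₁) s + f₂ s * deriv (deriv f₂) s - 1) * e1 +
      (-(f₁ s * deriv f₁ s + f₂ s * deriv f₂ s)) * e2
  -- FTC: ∫ (1 + κ g) = 0
  have hint : (∫ s in (0:ℝ)..L, (1 + kappa f₁ f₂ s * g s)) =
      (f₁ L * deriv f₁ L + f₂ L * deriv f₂ L) - (f₁ 0 * deriv f₁ 0 + f₂ 0 * deriv f₂ 0) := by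
    apply intervalIntegral.integral_eq_sub_of_hasDerivAt
    · intro s _; exact hG s
    · exact (continuous_const.add (hkc.mul hgc)).intervalIntegrable 0 L
  have pd : ∀ (f : ℝ → ℝ), Function.Periodic f L → deriv f L = deriv f 0 := by
    intro f hp
    have heq : (fun x => f (x + L)) = f := funext hp
    calc deriv f L = deriv f (0 + L) := by norm_num
      _ = deriv (fun x => f (x + L)) 0 := (deriv_comp_add_const f L 0).symm
      _ = deriv f 0 := by rw [heq]
  have hv₁ : f₁ L = f₁ 0 := by simpa using hp₁ 0
  have hv₂ : f₂ L = f₂ 0 := by simpa using hp₂ 0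
  have hzero : (∫ s in (0:ℝ)..L, (1 + kappa f₁ f₂ s * g s)) = 0 := by
    rw [hint, hv₁, hv₂, pd f₁ hp₁, pd f₂ hp₂]; ring
  have hkg : (∫ s in (0:ℝ)..L, kappa f₁ f₂ s * g s) = -L := by
    have hsplit : (∫ s in (0:ℝ)..L, (1 + kappa f₁ f₂ s * g s)) =
        (∫ s in (0:ℝ)..L, (1:ℝ)) + ∫ s in (0:ℝ)..L, kappa f₁ f₂ s * g s := by
      apply intervalIntegral.integral_add
      · exact intervalIntegrable_const
      · exact (hkc.mul hgc).intervalIntegrable 0 L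
    rw [hsplit] at hzero
    simp at hzero
    linarith
  -- ∫ g = -2A
  have hgint : (∫ s in (0:ℝ)..L, g s) = -2 * areaA L f₁ f₂ := by
    simp only [areaA, hg]; ring
  -- ∫ κ̃ g
  have hkdg : (∫ s in (0:ℝ)..L, kappaDev L f₁ f₂ s * g s) = -L + 4 * π * areaA L f₁ f₂ / L := by
    have : (∫ s in (0:ℝ)..L, kappaDev L f₁ f₂ s * g s) =
        (∫ s in (0:ℝ)..L, kappa f₁ f₂ s * g s) - (2 * π / L) * ∫ s in (0:ℝ)..L, g s := by
      rw [← intervalIntegral.integral_const_mul, ← intervalIntegral.integral_sub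
        (f := fun s => kappa f₁ f₂ s * g s) (g := fun s => 2 * π / L * g s)
        ((hkc.mul hgc).intervalIntegrable 0 L)
        ((continuous_const.mul hgc).intervalIntegrable 0 L)]
      congr 1; funext s; simp only [kappaDev]; ring
    rw [this, hkg, hgint]; field_simp; ring
  -- ∫ κ̃ = 0
  have hkd0 : (∫ s in (0:ℝ)..L, kappaDev L f₁ f₂ s) = 0 := by
    have : (∫ s in (0:ℝ)..L, kappaDev L f₁ f₂ s) =
        (∫ s in (0:ℝ)..L, kappa f₁ f₂ s) - (∫ s in (0:ℝ)..L, (2 * π / L : ℝ)) := by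
      rw [← intervalIntegral.integral_sub (hkc.intervalIntegrable 0 L)
        intervalIntegrable_const]
      rfl
    rw [this, hrot, intervalIntegral.integral_const]
    rw [sub_zero, smul_eq_mul]
    field_simp; ring
  refine ⟨by rw [Im1]; field_simp, ?_, ?_⟩
  · show Im1 L f₁ f₂ = -(1/L) * ∫ s in (0:ℝ)..L, kappaDev L f₁ f₂ s * g s
    rw [hkdg, Im1]; field_simp; ring
  · set c : ℝ := (1/L) * ∫ u in (0:ℝ)..L, g u with hcdef
    have hc : (∫ s in (0:ℝ)..L, kappaDev L f₁ f₂ s * (g s - c)) =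
        (∫ s in (0:ℝ)..L, kappaDev L f₁ f₂ s * g s) -
          c * (∫ s in (0:ℝ)..L, kappaDev L f₁ f₂ s) := by
      have heq : (fun s => kappaDev L f₁ f₂ s * (g s - c)) =
          fun s => kappaDev L f₁ f₂ s * g s - c * kappaDev L f₁ f₂ s := by
        funext s; ring
      rw [show (∫ s in (0:ℝ)..L, kappaDev L f₁ f₂ s * (g s - c)) =
          ∫ s in (0:ℝ)..L, (kappaDev L f₁ f₂ s * g s - c * kappaDev L f₁ f₂ s) by
        rw [heq] ,
        intervalIntegral.integral_sub (f := fun s => kappaDev L f₁ f₂ s * g s)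
          (g := fun s => c * kappaDev L f₁ f₂ s) ((hkdc.mul hgc).intervalIntegrable 0 L)
          ((continuous_const.mul hkdc).intervalIntegrable 0 L),
        intervalIntegral.integral_const_mul]
    show Im1 L f₁ f₂ = -(1/L) * ∫ s in (0:ℝ)..L, kappaDev L f₁ f₂ s * (g s - c)
    rw [hc, hkd0, hkdg, Im1]
    field_simp; ring
end
end

section
/- For every global solution of the length-preserving flow, the quantity I₀ is integrable in time: ∫₀^∞ I₀(t) dt ≤ L²/2 − 2π A(0) < ∞, where L = L(0) is the (constant) length. -/
open Real MeasureTheory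

noncomputable section

/-- Curvature of the time-`t` curve of a flow. -/
def flowKappa (f₁ f₂ : ℝ → ℝ → ℝ) (t s : ℝ) : ℝ :=
  kappa (fun s => f₁ s t) (fun s => f₂ s t) s

/-- Deviation of curvature of the time-`t` curve of a flow. -/
def flowKappaDev (L : ℝ → ℝ) (f₁ f₂ : ℝ → ℝ → ℝ) (t s : ℝ) : ℝ :=
  kappaDev (L t) (fun s => f₁ s t) (fun s => f₂ s t) s

/-- The quantity `I_ℓ(t)` along a flow. -/
def flowIq (L : ℝ → ℝ) (f₁ f₂ : ℝ → ℝ → ℝ) (ℓ : ℕ) (t : ℝ) : ℝ :=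
  Iq (L t) (fun s => f₁ s t) (fun s => f₂ s t) ℓ

/-- The signed area `A(t)` along a flow. -/
def flowArea (L : ℝ → ℝ) (f₁ f₂ : ℝ → ℝ → ℝ) (t : ℝ) : ℝ :=
  areaA (L t) (fun s => f₁ s t) (fun s => f₂ s t)

/-- The quantity `I₋₁(t)` along a flow. -/
def flowIm1 (L : ℝ → ℝ) (f₁ f₂ : ℝ → ℝ → ℝ) (t : ℝ) : ℝ :=
  Im1 (L t) (fun s => f₁ s t) (fun s => f₂ s t)

/-- The normal velocity `∂ₜ f · ν` of a flow (the time derivative being taken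
within the time interval `[0, ∞)`). -/
def nvel (f₁ f₂ : ℝ → ℝ → ℝ) (t s : ℝ) : ℝ :=
  derivWithin (fun τ => f₁ s τ) (Set.Ici 0) t * (-(deriv (fun u => f₂ u t) s)) +
  derivWithin (fun τ => f₂ s τ) (Set.Ici 0) t * deriv (fun u => f₁ u t) s

/-- The conditions common to all global curvature flows considered here: `f = (f₁, f₂)` is
smooth on `ℝ × [0, ∞)` and, for each `t ≥ 0`, the curve `f(·, t)` is `L(t)`-periodic,
parametrized by arc length, and has rotation number `1`. -/
def IsGlobalFlow (L : ℝ → ℝ) (f₁ f₂ : ℝ → ℝ → ℝ) : Prop :=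
  ContDiffOn ℝ (⊤ : ℕ∞) (fun p : ℝ × ℝ => (f₁ p.1 p.2, f₂ p.1 p.2))
    (Set.univ ×ˢ Set.Ici 0) ∧
  ∀ t, 0 ≤ t →
    0 < L t ∧
    Function.Periodic (fun s => f₁ s t) (L t) ∧
    Function.Periodic (fun s => f₂ s t) (L t) ∧
    (∀ s, (deriv (fun u => f₁ u t) s) ^ 2 + (deriv (fun u => f₂ u t) s) ^ 2 = 1) ∧
    (∫ s in (0:ℝ)..(L t), flowKappa f₁ f₂ t s) = 2 * π

/-- A global solution of the length-preserving flow
`∂ₜ f · ν = κ − (1/(2π)) ∫₀^L κ² ds`, with positive initial signed area. -/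
def IsLPFlow (L : ℝ → ℝ) (f₁ f₂ : ℝ → ℝ → ℝ) : Prop :=
  IsGlobalFlow L f₁ f₂ ∧ 0 < flowArea L f₁ f₂ 0 ∧
  ∀ t, 0 ≤ t → ∀ s,
    nvel f₁ f₂ t s =
      flowKappa f₁ f₂ t s -
        (1 / (2 * π)) * ∫ u in (0:ℝ)..(L t), (flowKappa f₁ f₂ t u) ^ 2

open Complex in
theorem isoperim (L : ℝ) (hL : 0 < L) (g₁ g₂ : ℝ → ℝ)
    (hg₁ : ContDiff ℝ (⊤ : ℕ∞) g₁) (hg₂ : ContDiff ℝ (⊤ : ℕ∞) g₂)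
    (hp₁ : Function.Periodic g₁ L) (hp₂ : Function.Periodic g₂ L)
    (harc : ∀ s, (deriv g₁ s) ^ 2 + (deriv g₂ s) ^ 2 = 1) :
    areaA L g₁ g₂ ≤ L ^ 2 / (4 * π) := by
  haveI : Fact (0 < L) := ⟨hL⟩
  set z : ℝ → ℂ := fun s => (g₁ s : ℂ) + (g₂ s : ℂ) * I with hzdef
  set w : ℝ → ℂ := fun s => Complex.ofReal (deriv g₁ s) + Complex.ofReal (deriv g₂ s) * I with hwdef
  have hd₁ : ∀ s, HasDerivAt g₁ (deriv g₁ s) s :=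
    fun s => (hg₁.differentiable (by simp) s).hasDerivAt
  have hd₂ : ∀ s, HasDerivAt g₂ (deriv g₂ s) s :=
    fun s => (hg₂.differentiable (by simp) s).hasDerivAt
  have hz : ∀ s, HasDerivAt z (w s) s := by
    intro s
    exact ((hd₁ s).ofReal_comp).add (((hd₂ s).ofReal_comp).mul_const I)
  have hzc : Continuous z :=
    (Complex.continuous_ofReal.comp hg₁.continuous).add
      ((Complex.continuous_ofReal.comp hg₂.continuous).mul continuous_const)
  have hpd₁ : ∀ s, deriv g₁ (s + L) = deriv g₁ s := by
    intro s
    rw [← deriv_comp_add_const g₁ L s]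
    congr 1
    exact funext fun x => hp₁ x
  have hpd₂ : ∀ s, deriv g₂ (s + L) = deriv g₂ s := by
    intro s
    rw [← deriv_comp_add_const g₂ L s]
    congr 1
    exact funext fun x => hp₂ x
  have hwc : Continuous w := by
    have h1 : Continuous (deriv g₁) := hg₁.continuous_deriv (by exact_mod_cast le_top)
    have h2 : Continuous (deriv g₂) := hg₂.continuous_deriv (by exact_mod_cast le_top)
    exact (Complex.continuous_ofReal.comp h1).add
      ((Complex.continuous_ofReal.comp h2).mul continuous_const)
  have hpz : Function.Periodic z L := fun s => by simp [hzdef, hp₁ s, hp₂ s]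
  have hpw : Function.Periodic w L := fun s => by
    simp only [hwdef, hpd₁ s, hpd₂ s]
  -- lift to the circle
  have hzLC : z 0 = z L := by rw [← hpz 0, zero_add]
  have hwLC : w 0 = w L := by rw [← hpw 0, zero_add]
  have hlift : ∀ (u : ℝ → ℂ), Function.Periodic u L → ∀ x : ℝ,
      AddCircle.liftIco L 0 u ↑x = u x := by
    intro u hu x
    have h1 : x - ⌊x / L⌋ * L ∈ Set.Ico (0:ℝ) L :=
      ⟨Int.sub_floor_div_mul_nonneg x hL, Int.sub_floor_div_mul_lt x hL⟩
    have h2 : ((x - ⌊x / L⌋ * L : ℝ) : AddCircle L) = (x : AddCircle L) := by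
      rw [QuotientAddGroup.mk_sub]
      have : ((⌊x / L⌋ * L : ℝ) : AddCircle L) = 0 := by
        rw [show ((⌊x / L⌋ : ℝ) * L) = (⌊x / L⌋ : ℤ) • L by simp [zsmul_eq_mul],
          QuotientAddGroup.mk_zsmul]
        simp [AddCircle.coe_period]
      rw [this, sub_zero]
    rw [← h2, AddCircle.liftIco_coe_apply (by rwa [zero_add]), hu.sub_int_mul_eq]
  set ζ : C(AddCircle L, ℂ) := ⟨AddCircle.liftIco L 0 z,
    AddCircle.liftIco_zero_continuous hzLC hzc.continuousOn⟩ with hζdef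
  set ω : C(AddCircle L, ℂ) := ⟨AddCircle.liftIco L 0 w,
    AddCircle.liftIco_zero_continuous hwLC hwc.continuousOn⟩ with hωdef
  have hζ : ∀ x : ℝ, ζ ↑x = z x := hlift z hpz
  have hω : ∀ x : ℝ, ω ↑x = w x := hlift w hpw
  set Z := ContinuousMap.toLp (E := ℂ) 2 AddCircle.haarAddCircle ℂ ζ with hZdef
  set W := ContinuousMap.toLp (E := ℂ) 2 AddCircle.haarAddCircle ℂ ω with hWdef
  set c : ℤ → ℂ := fun n => fourierCoeff (⇑ζ) n with hcdef
  set d : ℤ → ℂ := fun n => fourierCoeff (⇑ω) n with hddef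
  -- relation between coefficients
  have hab : (0:ℝ) < 0 + L := by linarith
  have hceq : ∀ n : ℤ, c n = fourierCoeffOn hab z n := by
    intro n
    show fourierCoeff (AddCircle.liftIco L 0 z) n = _
    rw [fourierCoeff_liftIco_eq]
  have hdeq : ∀ n : ℤ, d n = fourierCoeffOn hab w n := by
    intro n
    show fourierCoeff (AddCircle.liftIco L 0 w) n = _
    rw [fourierCoeff_liftIco_eq]
  have hzz : z (0 + L) - z 0 = 0 := by rw [zero_add, ← hzLC, sub_self]
  have hwint : IntervalIntegrable w volume 0 (0 + L) := hwc.intervalIntegrable _ _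
  have hd0 : d 0 = 0 := by
    rw [hdeq, fourierCoeffOn_eq_integral]
    have : ∫ x in (0:ℝ)..(0 + L), fourier (-(0:ℤ)) (x : AddCircle (0 + L - 0)) • w x
        = z (0 + L) - z 0 := by
      rw [show (-(0:ℤ)) = 0 by ring]
      simp only [fourier_zero, one_smul]
      exact intervalIntegral.integral_eq_sub_of_hasDerivAt (fun x _ => hz x) hwint
    rw [this, hzz, smul_zero]
  have hcd : ∀ n : ℤ, d n = (2 * π * Complex.I * n / L) * c n := by
    intro n
    rcases eq_or_ne n 0 with rfl | hn
    · simp [hd0]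
    · have key := fourierCoeffOn_of_hasDerivAt hab hn (fun x _ => hz x) hwint
      rw [hzz, mul_zero, zero_sub, ← hceq, ← hdeq] at key
      have hLne : (L : ℂ) ≠ 0 := by exact_mod_cast hL.ne'
      have hπ : (π : ℂ) ≠ 0 := by exact_mod_cast Real.pi_ne_zero
      have hnne : (n : ℂ) ≠ 0 := by exact_mod_cast hn
      have h2 : (-2 * (π:ℂ) * Complex.I * n) ≠ 0 := by
        simp [Complex.I_ne_zero, hπ, hnne]
      have key2 : c n = 1 / (-2 * (π:ℂ) * Complex.I * n) * -((L:ℂ) * d n) := by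
        convert key using 2
        push_cast
        ring
      field_simp at key2 ⊢
      linear_combination (-1 : ℂ) * key2
  have hLne : (L : ℂ) ≠ 0 := by exact_mod_cast hL.ne'
  -- integrals over the circle versus interval integrals
  have hInt : ∀ φ : AddCircle L → ℂ,
      ∫ a, φ a ∂AddCircle.haarAddCircle = (1 / L : ℂ) * ∫ x in (0:ℝ)..L, φ ↑x := by
    intro φ
    have h1 : ∫ x in (0:ℝ)..(0 + L), φ ↑x = ∫ b, φ b :=
      AddCircle.intervalIntegral_preimage L 0 φ
    rw [AddCircle.volume_eq_smul_haarAddCircle, integral_smul_measure,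
      ENNReal.toReal_ofReal hL.le, zero_add] at h1
    rw [h1, Complex.real_smul]
    field_simp
  -- the two inner products
  have hWW : (inner ℂ W W) = 1 := by
    rw [hWdef, ContinuousMap.inner_toLp]
    have hpt : ∀ a : AddCircle L, (starRingEnd ℂ) (ω a) * ω a = 1 := by
      intro a
      induction a using QuotientAddGroup.induction_on with
      | H x =>
        rw [hω x, ← Complex.normSq_eq_conj_mul_self]
        rw [show w x = Complex.ofReal (deriv g₁ x) + Complex.ofReal (deriv g₂ x) * I from rfl]
        rw [Complex.normSq_add_mul_I]
        exact_mod_cast congrArg (Complex.ofReal) (harc x)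
    calc ∫ a, ω a * (starRingEnd ℂ) (ω a) ∂AddCircle.haarAddCircle
        = ∫ _a, (1:ℂ) ∂AddCircle.haarAddCircle := by
          exact integral_congr_ae (Filter.Eventually.of_forall fun a => (mul_comm _ _).trans (hpt a))
      _ = 1 := by simp
  have hZW : (inner ℂ Z W) =
      (1 / L : ℂ) * ∫ x in (0:ℝ)..L, (starRingEnd ℂ) (z x) * w x := by
    rw [hZdef, hWdef, ContinuousMap.inner_toLp,
      hInt (fun a => ω a * (starRingEnd ℂ) (ζ a))]
    congr 1
    refine intervalIntegral.integral_congr fun x _ => ?_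
    rw [hζ x, hω x, mul_comm]
  -- Parseval as HasSum statements
  have hdW : ∀ n, fourierBasis.repr W n = d n := by
    intro n
    rw [hWdef, fourierBasis_repr]
    exact fourierCoeff_toLp ω n
  have hcZ : ∀ n, fourierBasis.repr Z n = c n := by
    intro n
    rw [hZdef, fourierBasis_repr]
    exact fourierCoeff_toLp ζ n
  have hWWsum : HasSum (fun n => (starRingEnd ℂ) (d n) * d n) (inner ℂ W W) := by
    have h := fourierBasis.hasSum_inner_mul_inner W W
    refine h.congr_fun fun n => ?_
    rw [← fourierBasis.repr_apply_apply, hdW, ← inner_conj_symm,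
      ← fourierBasis.repr_apply_apply, hdW]
  have hZWsum : HasSum (fun n => (starRingEnd ℂ) (c n) * d n) (inner ℂ Z W) := by
    have h := fourierBasis.hasSum_inner_mul_inner Z W
    refine h.congr_fun fun n => ?_
    rw [← fourierBasis.repr_apply_apply, hdW, ← inner_conj_symm,
      ← fourierBasis.repr_apply_apply, hcZ]
  -- pass to real series
  set q : ℤ → ℝ := fun n => Complex.normSq (c n) with hqdef
  have hq0 : ∀ n, 0 ≤ q n := fun n => Complex.normSq_nonneg _
  have hdn : ∀ n : ℤ, d n = Complex.ofReal (2 * π * n / L) * Complex.I * c n := by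
    intro n
    rw [hcd n]
    push_cast
    ring
  have hterm1 : ∀ n : ℤ, (starRingEnd ℂ) (d n) * d n
      = Complex.ofReal ((2 * π * n / L) ^ 2 * q n) := by
    intro n
    rw [← Complex.normSq_eq_conj_mul_self, hdn n, Complex.normSq_mul, Complex.normSq_mul,
      Complex.normSq_I, Complex.normSq_ofReal]
    push_cast
    ring
  have hterm2 : ∀ n : ℤ, (starRingEnd ℂ) (c n) * d n
      = Complex.ofReal ((2 * π * n / L) * q n) * Complex.I := by
    intro n
    rw [hdn n]
    have h1 : (starRingEnd ℂ) (c n) * (Complex.ofReal (2 * π * n / L) * Complex.I * c n)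
        = Complex.ofReal (2 * π * n / L) * Complex.I * ((starRingEnd ℂ) (c n) * c n) := by
      ring
    rw [h1, ← Complex.normSq_eq_conj_mul_self]
    push_cast
    ring
  have hsumW : HasSum (fun n : ℤ => (2 * π * n / L) ^ 2 * q n) 1 := by
    have h1 : HasSum (fun n : ℤ => Complex.ofReal ((2 * π * n / L) ^ 2 * q n)) 1 := by
      rw [← hWW]
      exact hWWsum.congr_fun fun n => (hterm1 n).symm
    have h2 := h1.mapL Complex.reCLM
    simp only [Complex.reCLM_apply, Complex.ofReal_re, Complex.one_re] at h2
    exact h2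
  have hsumZW : HasSum (fun n : ℤ => (2 * π * n / L) * q n) ((inner ℂ Z W).im) := by
    have h1 : HasSum (fun n : ℤ => Complex.ofReal ((2 * π * n / L) * q n) * Complex.I)
        (inner ℂ Z W) := hZWsum.congr_fun fun n => (hterm2 n).symm
    have h2 := h1.mapL Complex.imCLM
    simp only [Complex.imCLM_apply, Complex.mul_im, Complex.ofReal_re, Complex.ofReal_im,
      Complex.I_re, Complex.I_im, mul_one, mul_zero, zero_mul, add_zero, zero_add] at h2
    exact h2
  -- compute the imaginary part of ⟪Z, W⟫
  have hc₁ : Continuous (deriv g₁) := hg₁.continuous_deriv (by exact_mod_cast le_top)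
  have hc₂ : Continuous (deriv g₂) := hg₂.continuous_deriv (by exact_mod_cast le_top)
  have himZW : (inner ℂ Z W).im
      = (1 / L) * ∫ x in (0:ℝ)..L, (g₁ x * deriv g₂ x - g₂ x * deriv g₁ x) := by
    rw [hZW]
    have hint1 : IntervalIntegrable
        (fun x => Complex.ofReal (g₁ x * deriv g₁ x + g₂ x * deriv g₂ x)) volume 0 L := by
      apply Continuous.intervalIntegrable
      exact Complex.continuous_ofReal.comp
        ((hg₁.continuous.mul hc₁).add (hg₂.continuous.mul hc₂))
    have hint2 : IntervalIntegrable
        (fun x => Complex.ofReal (g₁ x * deriv g₂ x - g₂ x * deriv g₁ x) * Complex.I)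
        volume 0 L := by
      apply Continuous.intervalIntegrable
      exact (Complex.continuous_ofReal.comp
        ((hg₁.continuous.mul hc₂).sub (hg₂.continuous.mul hc₁))).mul continuous_const
    have hconv : (∫ x in (0:ℝ)..L, (starRingEnd ℂ) (z x) * w x)
        = Complex.ofReal (∫ x in (0:ℝ)..L, (g₁ x * deriv g₁ x + g₂ x * deriv g₂ x))
          + Complex.ofReal (∫ x in (0:ℝ)..L, (g₁ x * deriv g₂ x - g₂ x * deriv g₁ x))
            * Complex.I := by
      rw [← intervalIntegral.integral_ofReal, ← intervalIntegral.integral_ofReal,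
        ← intervalIntegral.integral_mul_const, ← intervalIntegral.integral_add hint1 hint2]
      refine intervalIntegral.integral_congr fun x _ => ?_
      show (starRingEnd ℂ) (z x) * w x = _
      rw [show z x = Complex.ofReal (g₁ x) + Complex.ofReal (g₂ x) * I from rfl,
        show w x = Complex.ofReal (deriv g₁ x) + Complex.ofReal (deriv g₂ x) * I from rfl]
      apply Complex.ext <;> simp <;> ring
    rw [hconv, show (1 / (L:ℂ)) = Complex.ofReal (1 / L) by push_cast; ring]
    simp [Complex.add_im, Complex.mul_im, Complex.ofReal_im, Complex.ofReal_re]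
  have hA : areaA L g₁ g₂ = (L / 2) * (inner ℂ Z W).im := by
    rw [himZW, areaA]
    have hneg : (∫ s in (0:ℝ)..L, (g₁ s * (-(deriv g₂ s)) + g₂ s * deriv g₁ s))
        = - ∫ x in (0:ℝ)..L, (g₁ x * deriv g₂ x - g₂ x * deriv g₁ x) := by
      rw [← intervalIntegral.integral_neg]
      refine intervalIntegral.integral_congr fun x _ => by ring
    rw [hneg]
    field_simp
  -- the final comparison of the two series
  have hsum1 : HasSum (fun n : ℤ => π * n * q n) (areaA L g₁ g₂) := by
    rw [hA]
    have h := hsumZW.mul_left (L / 2)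
    refine h.congr_fun fun n => ?_
    have hL0 : L ≠ 0 := hL.ne'
    field_simp
  have hsum2 : HasSum (fun n : ℤ => π * (n:ℝ) ^ 2 * q n) (L ^ 2 / (4 * π)) := by
    have h := hsumW.mul_left (L ^ 2 / (4 * π))
    rw [mul_one] at h
    refine h.congr_fun fun n => ?_
    have hL0 : L ≠ 0 := hL.ne'
    field_simp
    ring
  refine hasSum_le (fun n => ?_) hsum1 hsum2
  have hnsq : (n:ℝ) ≤ (n:ℝ) ^ 2 := by exact_mod_cast Int.le_self_sq n
  have hq := hq0 n
  nlinarith [mul_nonneg (mul_nonneg Real.pi_pos.le (sub_nonneg.mpr hnsq)) hq]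



/-- partial derivative in the first (space) variable -/
def pS (F : ℝ × ℝ → ℝ) : ℝ × ℝ → ℝ := fun p => deriv (fun u => F (u, p.2)) p.1

/-- partial derivative in the second (time) variable -/
def pT (F : ℝ × ℝ → ℝ) : ℝ × ℝ → ℝ := fun p => deriv (fun τ => F (p.1, τ)) p.2

namespace FlowAux

def Uo : Set (ℝ × ℝ) := Set.univ ×ˢ Set.Ioi (0:ℝ)
def Sc : Set (ℝ × ℝ) := Set.univ ×ˢ Set.Ici (0:ℝ)

lemma isOpen_Uo : IsOpen Uo := isOpen_univ.prod isOpen_Ioi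

lemma mem_Uo_iff {p : ℝ × ℝ} : p ∈ Uo ↔ 0 < p.2 := by
  simp [Uo]

lemma mem_Sc_iff {p : ℝ × ℝ} : p ∈ Sc ↔ 0 ≤ p.2 := by
  simp [Sc]

lemma Uo_subset_Sc : Uo ⊆ Sc := fun p hp => mem_Sc_iff.2 (le_of_lt (mem_Uo_iff.1 hp))

lemma uniqueDiffOn_Sc : UniqueDiffOn ℝ Sc :=
  uniqueDiffOn_univ.prod (uniqueDiffOn_Ici 0)

lemma lineS_hasDerivAt (t s : ℝ) :
    HasDerivAt (fun u : ℝ => (u, t)) ((1:ℝ), (0:ℝ)) s :=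
  (hasDerivAt_id s).prodMk (hasDerivAt_const s t)

lemma lineT_hasDerivAt (s t : ℝ) :
    HasDerivAt (fun τ : ℝ => (s, τ)) ((0:ℝ), (1:ℝ)) t :=
  (hasDerivAt_const t s).prodMk (hasDerivAt_id t)

variable {F : ℝ × ℝ → ℝ}

lemma contDiffAt_of_Uo (hF : ContDiffOn ℝ (⊤:ℕ∞) F Uo) {p : ℝ × ℝ} (hp : p ∈ Uo) :
    ContDiffAt ℝ (⊤:ℕ∞) F p :=
  hF.contDiffAt (isOpen_Uo.mem_nhds hp)

/-- the space-section is smooth (at every point), given smoothness on `Uo` around. -/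
lemma sectionS_contDiffAt (hF : ContDiffOn ℝ (⊤:ℕ∞) F Uo) {s t : ℝ} (ht : 0 < t) :
    ContDiffAt ℝ (⊤:ℕ∞) (fun u => F (u, t)) s :=
  (contDiffAt_of_Uo hF (mem_Uo_iff.2 ht)).comp s (contDiff_id.prodMk contDiff_const).contDiffAt

lemma sectionT_contDiffAt (hF : ContDiffOn ℝ (⊤:ℕ∞) F Uo) {s t : ℝ} (ht : 0 < t) :
    ContDiffAt ℝ (⊤:ℕ∞) (fun τ => F (s, τ)) t :=
  (contDiffAt_of_Uo hF (mem_Uo_iff.2 ht)).comp t (contDiff_const.prodMk contDiff_id).contDiffAt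

lemma hasDerivAt_sectionS (hF : ContDiffOn ℝ (⊤:ℕ∞) F Uo) {s t : ℝ} (ht : 0 < t) :
    HasDerivAt (fun u => F (u, t)) (pS F (s, t)) s :=
  ((sectionS_contDiffAt hF ht).differentiableAt (by simp)).hasDerivAt

lemma hasDerivAt_sectionT (hF : ContDiffOn ℝ (⊤:ℕ∞) F Uo) {s t : ℝ} (ht : 0 < t) :
    HasDerivAt (fun τ => F (s, τ)) (pT F (s, t)) t :=
  ((sectionT_contDiffAt hF ht).differentiableAt (by simp)).hasDerivAt

lemma pS_eq_fderiv (hF : ContDiffOn ℝ (⊤:ℕ∞) F Uo) {p : ℝ × ℝ} (hp : p ∈ Uo) :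
    pS F p = fderiv ℝ F p (1, 0) := by
  have hd : HasFDerivAt F (fderiv ℝ F p) p :=
    ((contDiffAt_of_Uo hF hp).differentiableAt (by simp)).hasFDerivAt
  have := hd.comp_hasDerivAt p.1 (by simpa using lineS_hasDerivAt p.2 p.1)
  exact this.deriv

lemma pT_eq_fderiv (hF : ContDiffOn ℝ (⊤:ℕ∞) F Uo) {p : ℝ × ℝ} (hp : p ∈ Uo) :
    pT F p = fderiv ℝ F p (0, 1) := by
  have hd : HasFDerivAt F (fderiv ℝ F p) p :=
    ((contDiffAt_of_Uo hF hp).differentiableAt (by simp)).hasFDerivAt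
  have := hd.comp_hasDerivAt p.2 (by simpa using lineT_hasDerivAt p.1 p.2)
  exact this.deriv

lemma fderiv_contDiffOn (hF : ContDiffOn ℝ (⊤:ℕ∞) F Uo) :
    ContDiffOn ℝ (⊤:ℕ∞) (fderiv ℝ F) Uo := by
  have := hF.fderiv_of_isOpen isOpen_Uo (m := (⊤:ℕ∞)) (by exact_mod_cast le_top)
  exact this

lemma pS_contDiffOn (hF : ContDiffOn ℝ (⊤:ℕ∞) F Uo) :
    ContDiffOn ℝ (⊤:ℕ∞) (pS F) Uo := by
  refine ContDiffOn.congr ((fderiv_contDiffOn hF).clm_apply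
    (contDiffOn_const (c := ((1:ℝ), (0:ℝ))))) ?_
  exact fun p hp => pS_eq_fderiv hF hp

lemma pT_contDiffOn (hF : ContDiffOn ℝ (⊤:ℕ∞) F Uo) :
    ContDiffOn ℝ (⊤:ℕ∞) (pT F) Uo := by
  refine ContDiffOn.congr ((fderiv_contDiffOn hF).clm_apply
    (contDiffOn_const (c := ((0:ℝ), (1:ℝ))))) ?_
  exact fun p hp => pT_eq_fderiv hF hp

/-- Clairaut on the open half plane. -/
lemma clairaut (hF : ContDiffOn ℝ (⊤:ℕ∞) F Uo) {p : ℝ × ℝ} (hp : p ∈ Uo) :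
    pT (pS F) p = pS (pT F) p := by
  set G := fderiv ℝ F with hGdef
  set f'' := fderiv ℝ G p with hf''def
  have hGd : HasFDerivAt G f'' p :=
    (((fderiv_contDiffOn hF).contDiffAt (isOpen_Uo.mem_nhds hp)).differentiableAt
      (by simp)).hasFDerivAt
  have hsymm : ∀ v w, f'' v w = f'' w v := by
    intro v w
    refine second_derivative_symmetric_of_eventually (f := F) ?_ hGd v w
    filter_upwards [isOpen_Uo.mem_nhds hp] with y hy
    exact ((contDiffAt_of_Uo hF hy).differentiableAt (by simp)).hasFDerivAt
  have h1 : pT (pS F) p = f'' (0, 1) (1, 0) := by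
    have heq : (fun τ => pS F (p.1, τ)) =ᶠ[nhds p.2] (fun τ => G (p.1, τ) (1, 0)) := by
      have hne : Set.Ioi (0:ℝ) ∈ nhds p.2 := isOpen_Ioi.mem_nhds (mem_Uo_iff.1 hp)
      filter_upwards [hne] with τ hτ
      exact pS_eq_fderiv hF (mem_Uo_iff.2 hτ)
    have hder : HasDerivAt (fun τ => G (p.1, τ) (1, 0)) (f'' (0, 1) (1, 0)) p.2 := by
      have hcomp : HasDerivAt (fun τ => G (p.1, τ)) (f'' (0, 1)) p.2 :=
        hGd.comp_hasDerivAt p.2 (by simpa using lineT_hasDerivAt p.1 p.2)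
      have := hcomp.clm_apply (hasDerivAt_const p.2 ((1:ℝ), (0:ℝ)))
      simpa using this
    show deriv (fun τ => pS F (p.1, τ)) p.2 = _
    rw [Filter.EventuallyEq.deriv_eq heq]
    exact hder.deriv
  have h2 : pS (pT F) p = f'' (1, 0) (0, 1) := by
    have heq : (fun u => pT F (u, p.2)) =ᶠ[nhds p.1] (fun u => G (u, p.2) (0, 1)) := by
      have hne : {u : ℝ | (u, p.2) ∈ Uo} ∈ nhds p.1 := by
        have : {u : ℝ | (u, p.2) ∈ Uo} = Set.univ := by
          ext u; simp [mem_Uo_iff, mem_Uo_iff.1 hp]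
        rw [this]; exact Filter.univ_mem
      filter_upwards [hne] with u hu
      exact pT_eq_fderiv hF hu
    have hder : HasDerivAt (fun u => G (u, p.2) (0, 1)) (f'' (1, 0) (0, 1)) p.1 := by
      have hcomp : HasDerivAt (fun u => G (u, p.2)) (f'' (1, 0)) p.1 :=
        hGd.comp_hasDerivAt p.1 (by simpa using lineS_hasDerivAt p.2 p.1)
      have := hcomp.clm_apply (hasDerivAt_const p.1 ((0:ℝ), (1:ℝ)))
      simpa using this
    show deriv (fun u => pT F (u, p.2)) p.1 = _
    rw [Filter.EventuallyEq.deriv_eq heq]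
    exact hder.deriv
  rw [h1, h2, hsymm]

/-- spatial partial derivative via `fderivWithin` on the closed half plane. -/
lemma pS_eq_fderivWithin (hF : ContDiffOn ℝ (⊤:ℕ∞) F Sc) {p : ℝ × ℝ} (hp : p ∈ Sc) :
    pS F p = fderivWithin ℝ F Sc p (1, 0) := by
  have hd : HasFDerivWithinAt F (fderivWithin ℝ F Sc p) Sc p :=
    ((hF.differentiableOn (by simp)) p hp).hasFDerivWithinAt
  have hline : HasDerivWithinAt (fun u : ℝ => (u, p.2)) ((1:ℝ), (0:ℝ)) Set.univ p.1 :=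
    (lineS_hasDerivAt p.2 p.1).hasDerivWithinAt
  have hmaps : Set.MapsTo (fun u : ℝ => (u, p.2)) Set.univ Sc :=
    fun u _ => mem_Sc_iff.2 (mem_Sc_iff.1 hp)
  have := hd.comp_hasDerivWithinAt p.1 hline hmaps
  rw [hasDerivWithinAt_univ] at this
  exact (by simpa [Function.comp_def] using this : HasDerivAt (fun u => F (u, p.2)) _ p.1).deriv

/-- joint continuity of `pS F` on the closed half plane. -/
lemma pS_continuousOn (hF : ContDiffOn ℝ (⊤:ℕ∞) F Sc) : ContinuousOn (pS F) Sc := by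
  refine ContinuousOn.congr ?_ (fun p hp => pS_eq_fderivWithin hF hp)
  exact ((hF.continuousOn_fderivWithin uniqueDiffOn_Sc (by exact_mod_cast le_top)).clm_apply
    (continuousOn_const (c := ((1:ℝ), (0:ℝ)))))

/-- smooth space-sections on the closed half plane. -/
lemma sectionS_contDiff (hF : ContDiffOn ℝ (⊤:ℕ∞) F Sc) {t : ℝ} (ht : 0 ≤ t) :
    ContDiff ℝ (⊤:ℕ∞) (fun u => F (u, t)) := by
  rw [← contDiffOn_univ]
  exact hF.comp (contDiff_id.prodMk contDiff_const).contDiffOn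
    (fun u _ => mem_Sc_iff.2 ht)

end FlowAux


section FlowLemmas

open FlowAux

variable {L : ℝ → ℝ} {f₁ f₂ : ℝ → ℝ → ℝ}

/-- first component of the flow map, as a function on the plane -/
private def FF₁ (f₁ : ℝ → ℝ → ℝ) : ℝ × ℝ → ℝ := fun p => f₁ p.1 p.2
private def FF₂ (f₂ : ℝ → ℝ → ℝ) : ℝ × ℝ → ℝ := fun p => f₂ p.1 p.2

lemma FF₁_contDiffOn (h : IsLPFlow L f₁ f₂) : ContDiffOn ℝ (⊤:ℕ∞) (FF₁ f₁) Sc :=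
  contDiff_fst.comp_contDiffOn h.1.1

lemma FF₂_contDiffOn (h : IsLPFlow L f₁ f₂) : ContDiffOn ℝ (⊤:ℕ∞) (FF₂ f₂) Sc :=
  contDiff_snd.comp_contDiffOn h.1.1

lemma sect₁_contDiff (h : IsLPFlow L f₁ f₂) {t : ℝ} (ht : 0 ≤ t) :
    ContDiff ℝ (⊤:ℕ∞) (fun s => f₁ s t) :=
  sectionS_contDiff (FF₁_contDiffOn h) ht

lemma sect₂_contDiff (h : IsLPFlow L f₁ f₂) {t : ℝ} (ht : 0 ≤ t) :
    ContDiff ℝ (⊤:ℕ∞) (fun s => f₂ s t) :=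
  sectionS_contDiff (FF₂_contDiffOn h) ht

lemma flow_area_bound (h : IsLPFlow L f₁ f₂) (hL : ∀ t, 0 ≤ t → L t = L 0)
    {t : ℝ} (ht : 0 ≤ t) :
    flowArea L f₁ f₂ t ≤ (L 0) ^ 2 / (4 * π) := by
  obtain ⟨hLpos, hp₁, hp₂, harc, -⟩ := h.1.2 t ht
  have := isoperim (L t) hLpos (fun s => f₁ s t) (fun s => f₂ s t)
    (sect₁_contDiff h ht) (sect₂_contDiff h ht) hp₁ hp₂ harc
  rwa [flowArea, hL t ht] at *
  
lemma flowIq_nonneg (h : IsLPFlow L f₁ f₂) {t : ℝ} (ht : 0 ≤ t) :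
    0 ≤ flowIq L f₁ f₂ 0 t := by
  have hLpos : 0 < L t := (h.1.2 t ht).1
  refine mul_nonneg (by positivity) ?_
  refine intervalIntegral.integral_nonneg hLpos.le fun s _ => ?_
  positivity

/-- the integrand of the area integral, as a function on the plane -/
private def PP (f₁ f₂ : ℝ → ℝ → ℝ) : ℝ × ℝ → ℝ := fun p =>
  FF₁ f₁ p * (-(pS (FF₂ f₂) p)) + FF₂ f₂ p * pS (FF₁ f₁) p

lemma PP_continuousOn (h : IsLPFlow L f₁ f₂) : ContinuousOn (PP f₁ f₂) Sc := by
  refine ContinuousOn.add ?_ ?_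
  · exact ((FF₁_contDiffOn h).continuousOn).mul ((pS_continuousOn (FF₂_contDiffOn h)).neg)
  · exact ((FF₂_contDiffOn h).continuousOn).mul (pS_continuousOn (FF₁_contDiffOn h))

lemma flowArea_eq (h : IsLPFlow L f₁ f₂) (hL : ∀ t, 0 ≤ t → L t = L 0)
    {t : ℝ} (ht : 0 ≤ t) :
    flowArea L f₁ f₂ t = -(1/2) * ∫ s in (0:ℝ)..(L 0), PP f₁ f₂ (s, t) := by
  rw [flowArea, areaA, hL t ht]
  rfl

/-- the time derivative of the area integrand -/
private def QQ (f₁ f₂ : ℝ → ℝ → ℝ) : ℝ × ℝ → ℝ := fun p =>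
  (pT (FF₁ f₁) p * (-(pS (FF₂ f₂) p)) + FF₁ f₁ p * (-(pT (pS (FF₂ f₂)) p))) +
  (pT (FF₂ f₂) p * pS (FF₁ f₁) p + FF₂ f₂ p * pT (pS (FF₁ f₁)) p)

lemma QQ_continuousOn (h : IsLPFlow L f₁ f₂) : ContinuousOn (QQ f₁ f₂) Uo := by
  have h₁ : ContDiffOn ℝ (⊤:ℕ∞) (FF₁ f₁) Uo := (FF₁_contDiffOn h).mono Uo_subset_Sc
  have h₂ : ContDiffOn ℝ (⊤:ℕ∞) (FF₂ f₂) Uo := (FF₂_contDiffOn h).mono Uo_subset_Sc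
  refine ContinuousOn.add (ContinuousOn.add ?_ ?_) (ContinuousOn.add ?_ ?_)
  · exact (pT_contDiffOn h₁).continuousOn.mul (pS_contDiffOn h₂).continuousOn.neg
  · exact h₁.continuousOn.mul (pT_contDiffOn (pS_contDiffOn h₂)).continuousOn.neg
  · exact (pT_contDiffOn h₂).continuousOn.mul (pS_contDiffOn h₁).continuousOn
  · exact h₂.continuousOn.mul (pT_contDiffOn (pS_contDiffOn h₁)).continuousOn

lemma QQ_hasDeriv (h : IsLPFlow L f₁ f₂) (s : ℝ) {x : ℝ} (hx : 0 < x) :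
    HasDerivAt (fun τ => PP f₁ f₂ (s, τ)) (QQ f₁ f₂ (s, x)) x := by
  have h₁ : ContDiffOn ℝ (⊤:ℕ∞) (FF₁ f₁) Uo := (FF₁_contDiffOn h).mono Uo_subset_Sc
  have h₂ : ContDiffOn ℝ (⊤:ℕ∞) (FF₂ f₂) Uo := (FF₂_contDiffOn h).mono Uo_subset_Sc
  have hd1 : HasDerivAt (fun τ => FF₁ f₁ (s, τ)) (pT (FF₁ f₁) (s, x)) x :=
    hasDerivAt_sectionT h₁ hx
  have hd2 : HasDerivAt (fun τ => FF₂ f₂ (s, τ)) (pT (FF₂ f₂) (s, x)) x :=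
    hasDerivAt_sectionT h₂ hx
  have hd3 : HasDerivAt (fun τ => pS (FF₂ f₂) (s, τ)) (pT (pS (FF₂ f₂)) (s, x)) x :=
    hasDerivAt_sectionT (pS_contDiffOn h₂) hx
  have hd4 : HasDerivAt (fun τ => pS (FF₁ f₁) (s, τ)) (pT (pS (FF₁ f₁)) (s, x)) x :=
    hasDerivAt_sectionT (pS_contDiffOn h₁) hx
  exact (hd1.mul hd3.neg).add (hd2.mul hd4)

/-- differentiation under the integral sign for the area integral -/
lemma area_int_hasDeriv (h : IsLPFlow L f₁ f₂) (hL : ∀ t, 0 ≤ t → L t = L 0)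
    {t : ℝ} (ht : 0 < t) :
    HasDerivAt (fun τ => ∫ s in (0:ℝ)..(L 0), PP f₁ f₂ (s, τ))
      (∫ s in (0:ℝ)..(L 0), QQ f₁ f₂ (s, t)) t := by
  set L₀ := L 0 with hL₀
  have hP := PP_continuousOn h
  have hQ := QQ_continuousOn h
  have hε : (0:ℝ) < t / 2 := by linarith
  have hball : Metric.ball t (t / 2) ⊆ Set.Ioi (0:ℝ) := by
    intro x hx
    rw [Real.ball_eq_Ioo] at hx
    have := hx.1
    simp only [Set.mem_Ioi]
    linarith
  have hKsub : (Set.uIcc (0:ℝ) L₀ ×ˢ Set.Icc (t / 2) (t + t / 2)) ⊆ Uo := by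
    rintro ⟨s, τ⟩ ⟨-, hτ⟩
    exact mem_Uo_iff.2 (by linarith [hτ.1] : (0:ℝ) < τ)
  obtain ⟨C, hC⟩ := (isCompact_uIcc.prod isCompact_Icc).exists_bound_of_continuousOn
    (hQ.mono hKsub)
  have hsecP : ∀ {x : ℝ}, 0 < x → Continuous (fun s => PP f₁ f₂ (s, x)) := by
    intro x hx
    refine (hP.mono Uo_subset_Sc).comp_continuous
      (continuous_id.prodMk continuous_const) fun s => mem_Uo_iff.2 hx
  have hsecQ : Continuous (fun s => QQ f₁ f₂ (s, t)) :=
    hQ.comp_continuous (continuous_id.prodMk continuous_const) fun s => mem_Uo_iff.2 ht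
  have key := (intervalIntegral.hasDerivAt_integral_of_dominated_loc_of_deriv_le
    (F := fun x s => PP f₁ f₂ (s, x)) (F' := fun x s => QQ f₁ f₂ (s, x))
    (a := (0:ℝ)) (b := L₀) (x₀ := t) (bound := fun _ => C) (μ := volume) (Metric.ball_mem_nhds t hε)
    ?_ ?_ ?_ ?_ ?_ ?_).2
  · exact key
  · filter_upwards [Ioi_mem_nhds ht] with x hx
    exact (hsecP hx).aestronglyMeasurable
  · exact (hsecP ht).intervalIntegrable _ _
  · exact hsecQ.aestronglyMeasurable
  · refine Filter.Eventually.of_forall fun s hs => fun x hx => ?_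
    refine hC (s, x) ⟨Set.uIoc_subset_uIcc hs, ?_⟩
    rw [Real.ball_eq_Ioo] at hx
    constructor <;> [linarith [hx.1]; linarith [hx.2]]
  · exact intervalIntegrable_const
  · refine Filter.Eventually.of_forall fun s hs => fun x hx => ?_
    exact QQ_hasDeriv h s (hball hx)

lemma flow_area_hasDeriv (h : IsLPFlow L f₁ f₂) (hL : ∀ t, 0 ≤ t → L t = L 0)
    {t : ℝ} (ht : 0 < t) :
    HasDerivAt (flowArea L f₁ f₂) (flowIq L f₁ f₂ 0 t / (2 * π)) t := by
  set L₀ := L 0 with hL₀def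
  have hLt : L t = L₀ := hL t ht.le
  obtain ⟨hLpos, hper₁, hper₂, harc, hrot⟩ := h.1.2 t ht.le
  rw [hLt] at hLpos hper₁ hper₂ hrot
  have h₁ : ContDiffOn ℝ (⊤:ℕ∞) (FF₁ f₁) Uo := (FF₁_contDiffOn h).mono Uo_subset_Sc
  have h₂ : ContDiffOn ℝ (⊤:ℕ∞) (FF₂ f₂) Uo := (FF₂_contDiffOn h).mono Uo_subset_Sc
  set κ : ℝ → ℝ := flowKappa f₁ f₂ t with hκdef
  set c : ℝ := (1 / (2 * π)) * ∫ u in (0:ℝ)..L₀, κ u ^ 2 with hcdef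
  -- sections at time t are continuous
  have sec : ∀ (G : ℝ × ℝ → ℝ), ContinuousOn G Uo → Continuous (fun s => G (s, t)) :=
    fun G hG => hG.comp_continuous (continuous_id.prodMk continuous_const)
      fun s => mem_Uo_iff.2 ht
  have hg₁ : ContDiff ℝ (⊤:ℕ∞) (fun s => f₁ s t) := sect₁_contDiff h ht.le
  have hg₂ : ContDiff ℝ (⊤:ℕ∞) (fun s => f₂ s t) := sect₂_contDiff h ht.le
  have hder₁ := (contDiff_infty_iff_deriv.mp hg₁).2
  have hder₂ := (contDiff_infty_iff_deriv.mp hg₂).2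
  have hdd₁ := (contDiff_infty_iff_deriv.mp hder₁).2
  have hdd₂ := (contDiff_infty_iff_deriv.mp hder₂).2
  have hκcont : Continuous κ := by
    rw [hκdef]
    show Continuous (fun s => kappa (fun u => f₁ u t) (fun u => f₂ u t) s)
    unfold kappa
    exact ((hdd₁.continuous.mul hder₂.continuous.neg).add
      (hdd₂.continuous.mul hder₁.continuous))
  -- the normal velocity rewritten in terms of partial derivatives
  have hnvel : ∀ s, pT (FF₁ f₁) (s, t) * (-(pS (FF₂ f₂) (s, t)))
      + pT (FF₂ f₂) (s, t) * pS (FF₁ f₁) (s, t) = κ s - c := by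
    intro s
    have hIci : Set.Ici (0:ℝ) ∈ nhds t :=
      Filter.mem_of_superset (Ioi_mem_nhds ht) Set.Ioi_subset_Ici_self
    have h1 := h.2.2 t ht.le s
    rw [nvel, derivWithin_of_mem_nhds hIci, derivWithin_of_mem_nhds hIci, hLt] at h1
    exact h1
  -- boundary values for integration by parts
  have hbd₁ : FF₁ f₁ (L₀, t) = FF₁ f₁ (0, t) := by
    have := hper₁ 0
    simpa [FF₁] using this
  have hbd₂ : FF₂ f₂ (L₀, t) = FF₂ f₂ (0, t) := by
    have := hper₂ 0
    simpa [FF₂] using this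
  have hbdT : ∀ (f : ℝ → ℝ → ℝ), (∀ τ, 0 ≤ τ → Function.Periodic (fun s => f s τ) (L τ)) →
      pT (FF₁ f) (L₀, t) = pT (FF₁ f) (0, t) := by
    intro f hper
    show deriv (fun τ => f L₀ τ) t = deriv (fun τ => f 0 τ) t
    refine Filter.EventuallyEq.deriv_eq ?_
    filter_upwards [Ioi_mem_nhds ht] with τ hτ
    have hτ0 : (0:ℝ) ≤ τ := le_of_lt hτ
    have := hper τ hτ0 0
    rw [hL τ hτ0] at this
    simpa using this
  -- integration by parts
  have parts : ∀ (G H : ℝ × ℝ → ℝ), ContDiffOn ℝ (⊤:ℕ∞) G Uo → ContDiffOn ℝ (⊤:ℕ∞) H Uo →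
      G (L₀, t) = G (0, t) → pT H (L₀, t) = pT H (0, t) →
      (∫ s in (0:ℝ)..L₀, G (s, t) * pS (pT H) (s, t))
        = - ∫ s in (0:ℝ)..L₀, pS G (s, t) * pT H (s, t) := by
    intro G H hG hH hGb hHb
    have hu : ∀ s ∈ Set.uIcc (0:ℝ) L₀, HasDerivAt (fun σ => G (σ, t)) (pS G (s, t)) s :=
      fun s _ => hasDerivAt_sectionS hG ht
    have hv : ∀ s ∈ Set.uIcc (0:ℝ) L₀,
        HasDerivAt (fun σ => pT H (σ, t)) (pS (pT H) (s, t)) s :=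
      fun s _ => hasDerivAt_sectionS (pT_contDiffOn hH) ht
    have hu' : IntervalIntegrable (fun s => pS G (s, t)) volume 0 L₀ :=
      (sec _ (pS_contDiffOn hG).continuousOn).intervalIntegrable _ _
    have hv' : IntervalIntegrable (fun s => pS (pT H) (s, t)) volume 0 L₀ :=
      (sec _ (pS_contDiffOn (pT_contDiffOn hH)).continuousOn).intervalIntegrable _ _
    have := intervalIntegral.integral_mul_deriv_eq_deriv_mul hu hv hu' hv'
    rw [hGb, hHb] at this
    rw [this]
    ring
  -- the integral of QQ equals twice the integral of the normal velocity
  have hQsplit : (∫ s in (0:ℝ)..L₀, QQ f₁ f₂ (s, t)) = 2 * (2 * π - c * L₀) := by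
    have hptm : ∀ s : ℝ, QQ f₁ f₂ (s, t) =
        (κ s - c) + (-(FF₁ f₁ (s, t) * pS (pT (FF₂ f₂)) (s, t))
          + FF₂ f₂ (s, t) * pS (pT (FF₁ f₁)) (s, t)) := by
      intro s
      have hcl₁ := clairaut h₁ (mem_Uo_iff.2 ht : ((s:ℝ), t) ∈ Uo)
      have hcl₂ := clairaut h₂ (mem_Uo_iff.2 ht : ((s:ℝ), t) ∈ Uo)
      rw [show QQ f₁ f₂ (s, t) =
        (pT (FF₁ f₁) (s, t) * (-(pS (FF₂ f₂) (s, t)))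
          + pT (FF₂ f₂) (s, t) * pS (FF₁ f₁) (s, t))
        + (-(FF₁ f₁ (s, t) * pT (pS (FF₂ f₂)) (s, t))
          + FF₂ f₂ (s, t) * pT (pS (FF₁ f₁)) (s, t)) from by rw [QQ]; ring,
        hnvel s, hcl₁, hcl₂]
    rw [intervalIntegral.integral_congr (fun s _ => hptm s)]
    have hi1 : IntervalIntegrable (fun s => κ s - c) volume 0 L₀ :=
      ((hκcont.sub continuous_const)).intervalIntegrable _ _
    have hi2 : IntervalIntegrable (fun s => -(FF₁ f₁ (s, t) * pS (pT (FF₂ f₂)) (s, t)))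
        volume 0 L₀ :=
      (((sec _ h₁.continuousOn).mul
        (sec _ (pS_contDiffOn (pT_contDiffOn h₂)).continuousOn)).neg).intervalIntegrable _ _
    have hi3 : IntervalIntegrable (fun s => FF₂ f₂ (s, t) * pS (pT (FF₁ f₁)) (s, t))
        volume 0 L₀ :=
      ((sec _ h₂.continuousOn).mul
        (sec _ (pS_contDiffOn (pT_contDiffOn h₁)).continuousOn)).intervalIntegrable _ _
    rw [intervalIntegral.integral_add hi1 (hi2.add hi3),
      intervalIntegral.integral_add hi2 hi3, intervalIntegral.integral_neg,
      parts (FF₁ f₁) (FF₂ f₂) h₁ h₂ hbd₁ (hbdT f₂ (fun τ hτ => (h.1.2 τ hτ).2.2.1)),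
      parts (FF₂ f₂) (FF₁ f₁) h₂ h₁ hbd₂ (hbdT f₁ (fun τ hτ => (h.1.2 τ hτ).2.1))]
    have hVint : ∫ s in (0:ℝ)..L₀, (κ s - c) = 2 * π - c * L₀ := by
      rw [intervalIntegral.integral_sub (hκcont.intervalIntegrable _ _)
        (intervalIntegrable_const), hrot, intervalIntegral.integral_const]
      simp [mul_comm]
    have hswap : (∫ s in (0:ℝ)..L₀, pS (FF₁ f₁) (s, t) * pT (FF₂ f₂) (s, t))
        - ∫ s in (0:ℝ)..L₀, pS (FF₂ f₂) (s, t) * pT (FF₁ f₁) (s, t)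
        = ∫ s in (0:ℝ)..L₀, (κ s - c) := by
      rw [← intervalIntegral.integral_sub
        (f := fun s => pS (FF₁ f₁) (s, t) * pT (FF₂ f₂) (s, t))
        (g := fun s => pS (FF₂ f₂) (s, t) * pT (FF₁ f₁) (s, t))
        (((sec _ (pS_contDiffOn h₁).continuousOn).mul
          (sec _ (pT_contDiffOn h₂).continuousOn)).intervalIntegrable _ _)
        (((sec _ (pS_contDiffOn h₂).continuousOn).mul
          (sec _ (pT_contDiffOn h₁).continuousOn)).intervalIntegrable _ _)]
      refine intervalIntegral.integral_congr fun s _ => ?_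
      rw [← hnvel s]
      ring
    rw [hVint] at *
    linarith [hswap, hVint]
  -- the value of I₀
  have hIq : flowIq L f₁ f₂ 0 t = L₀ * (∫ s in (0:ℝ)..L₀, κ s ^ 2) - 4 * π ^ 2 := by
    rw [flowIq, Iq, hLt]
    have hsimp : ∀ s : ℝ, (deriv^[0] (kappaDev L₀ (fun u => f₁ u t) (fun u => f₂ u t)) s) ^ 2
        = κ s ^ 2 - (4 * π / L₀) * κ s + (2 * π / L₀) ^ 2 := by
      intro s
      rw [Function.iterate_zero, id_eq, kappaDev]
      have : kappa (fun u => f₁ u t) (fun u => f₂ u t) s = κ s := rfl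
      rw [this]
      ring
    rw [intervalIntegral.integral_congr (fun s _ => hsimp s)]
    have hiκ2 : IntervalIntegrable (fun s => κ s ^ 2) volume 0 L₀ :=
      ((hκcont.pow 2)).intervalIntegrable _ _
    have hiκ : IntervalIntegrable (fun s => (4 * π / L₀) * κ s) volume 0 L₀ :=
      (continuous_const.mul hκcont).intervalIntegrable _ _
    have hmul : ∫ s in (0:ℝ)..L₀, (4 * π / L₀) * κ s = (4 * π / L₀) * (2 * π) := by
      rw [intervalIntegral.integral_const_mul, hrot]
    rw [intervalIntegral.integral_add (hiκ2.sub hiκ) intervalIntegrable_const,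
      intervalIntegral.integral_sub hiκ2 hiκ, hmul, intervalIntegral.integral_const]
    have hL0 : L₀ ≠ 0 := hLpos.ne'
    simp only [pow_one, smul_eq_mul, sub_zero]
    field_simp
    ring
  -- assemble
  have hD := (area_int_hasDeriv h hL ht).const_mul (-(1/2) : ℝ)
  have hEq : flowArea L f₁ f₂ =ᶠ[nhds t]
      fun τ => -(1/2) * ∫ s in (0:ℝ)..L₀, PP f₁ f₂ (s, τ) := by
    filter_upwards [Ioi_mem_nhds ht] with τ hτ
    exact flowArea_eq h hL hτ.le
  have hD2 : HasDerivAt (flowArea L f₁ f₂)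
      (-(1/2) * ∫ s in (0:ℝ)..L₀, QQ f₁ f₂ (s, t)) t :=
    HasDerivAt.congr_of_eventuallyEq hD hEq
  have hval : -(1/2) * (∫ s in (0:ℝ)..L₀, QQ f₁ f₂ (s, t))
      = flowIq L f₁ f₂ 0 t / (2 * π) := by
    rw [hQsplit, hIq, hcdef]
    have hπ : (π:ℝ) ≠ 0 := Real.pi_ne_zero
    field_simp
    ring
  rw [← hval]
  exact hD2

lemma flow_area_contWithin (h : IsLPFlow L f₁ f₂) (hL : ∀ t, 0 ≤ t → L t = L 0) :
    ContinuousWithinAt (flowArea L f₁ f₂) (Set.Ici 0) 0 := by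
  set L₀ := L 0 with hL₀
  have hP := PP_continuousOn h
  have hKsub : (Set.uIcc (0:ℝ) L₀ ×ˢ Set.Icc (0:ℝ) 1) ⊆ Sc := by
    rintro ⟨s, τ⟩ ⟨-, hτ⟩
    exact mem_Sc_iff.2 hτ.1
  obtain ⟨C, hC⟩ := (isCompact_uIcc.prod isCompact_Icc).exists_bound_of_continuousOn
    (hP.mono hKsub)
  have key : ContinuousWithinAt
      (fun t => -(1/2) * ∫ s in (0:ℝ)..L₀, PP f₁ f₂ (s, t)) (Set.Ici 0) 0 := by
    refine ContinuousWithinAt.mul continuousWithinAt_const ?_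
    refine intervalIntegral.continuousWithinAt_of_dominated_interval
      (bound := fun _ => C) ?_ ?_ intervalIntegrable_const ?_
    · filter_upwards [self_mem_nhdsWithin] with τ hτ
      have hcont : Continuous (fun s => PP f₁ f₂ (s, τ)) := by
        refine hP.comp_continuous (continuous_id.prodMk continuous_const) ?_
        exact fun s => mem_Sc_iff.2 hτ
      exact hcont.aestronglyMeasurable
    · have hIcc : Set.Icc (0:ℝ) 1 ∈ nhdsWithin (0:ℝ) (Set.Ici 0) := by
        rw [show Set.Icc (0:ℝ) 1 = Set.Ici 0 ∩ Set.Iic 1 from rfl]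
        exact Filter.inter_mem self_mem_nhdsWithin
          (mem_nhdsWithin_of_mem_nhds (Iic_mem_nhds one_pos))
      filter_upwards [hIcc] with τ hτ
      refine Filter.Eventually.of_forall fun s hs => ?_
      exact hC (s, τ) ⟨Set.uIoc_subset_uIcc hs, hτ⟩
    · refine Filter.Eventually.of_forall fun s _ => ?_
      refine ContinuousWithinAt.comp (hP (s, 0) (mem_Sc_iff.2 le_rfl)) ?_ ?_
      · exact (continuous_const.prodMk continuous_id).continuousWithinAt
      · exact fun τ hτ => mem_Sc_iff.2 hτ
  refine key.congr (fun τ hτ => flowArea_eq h hL hτ) (flowArea_eq h hL le_rfl)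

end FlowLemmas


/-- Along the length-preserving flow (for which `L(t) = L(0) =: L`), the quantity `I₀`
is integrable in time, with `∫₀^∞ I₀(t) dt ≤ L²/2 − 2πA(0) < ∞`. -/
theorem stmt_11 (L : ℝ → ℝ) (f₁ f₂ : ℝ → ℝ → ℝ) (h : IsLPFlow L f₁ f₂)
    (hL : ∀ t, 0 ≤ t → L t = L 0) :
    IntegrableOn (flowIq L f₁ f₂ 0) (Set.Ioi 0) ∧
    (∫ t in Set.Ioi (0:ℝ), flowIq L f₁ f₂ 0 t) ≤
      (L 0) ^ 2 / 2 - 2 * π * flowArea L f₁ f₂ 0 := by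
  set A := flowArea L f₁ f₂ with hAdef
  set I₀ := flowIq L f₁ f₂ 0 with hIdef
  have hπ : (0:ℝ) < 2 * π := by positivity
  have hg : ∀ x ∈ Set.Ioi (0:ℝ), HasDerivAt (fun τ => 2 * π * A τ) (I₀ x) x := by
    intro x hx
    have h1 := (flow_area_hasDeriv h hL (Set.mem_Ioi.1 hx)).const_mul (2 * π)
    have h2 : 2 * π * (I₀ x / (2 * π)) = I₀ x := by field_simp
    rwa [h2] at h1
  have hgpos : ∀ x ∈ Set.Ioi (0:ℝ), 0 ≤ I₀ x :=
    fun x hx => flowIq_nonneg h (le_of_lt (Set.mem_Ioi.1 hx))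
  have hgc : ContinuousWithinAt (fun τ => 2 * π * A τ) (Set.Ici 0) 0 :=
    (continuous_const.continuousWithinAt).mul (flow_area_contWithin h hL)
  -- A is monotone on [0, ∞)
  have hAcont : ContinuousOn A (Set.Ici 0) := by
    intro x hx
    rcases eq_or_lt_of_le (Set.mem_Ici.1 hx) with rfl | hx'
    · exact flow_area_contWithin h hL
    · exact (flow_area_hasDeriv h hL hx').continuousAt.continuousWithinAt
  have hAmono : MonotoneOn A (Set.Ici 0) := by
    have hint : interior (Set.Ici (0:ℝ)) = Set.Ioi 0 := interior_Ici
    refine monotoneOn_of_deriv_nonneg (convex_Ici 0) hAcont ?_ ?_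
    · rw [hint]
      exact fun x hx => (flow_area_hasDeriv h hL (Set.mem_Ioi.1 hx)).differentiableAt.differentiableWithinAt
    · rw [hint]
      intro x hx
      rw [(flow_area_hasDeriv h hL (Set.mem_Ioi.1 hx)).deriv]
      exact div_nonneg (hgpos x hx) hπ.le
  -- A has a limit at infinity
  set Abar : ℝ → ℝ := fun τ => A (max τ 0) with hAbar
  have hAbarmono : Monotone Abar := fun a b hab =>
    hAmono (Set.mem_Ici.2 (le_max_right _ _)) (Set.mem_Ici.2 (le_max_right _ _)) (max_le_max hab le_rfl)
  have hAbdd : BddAbove (Set.range Abar) := by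
    refine ⟨(L 0) ^ 2 / (4 * π), ?_⟩
    rintro y ⟨τ, rfl⟩
    exact flow_area_bound h hL (le_max_right _ _)
  have hAbartend : Filter.Tendsto Abar Filter.atTop (nhds (⨆ τ, Abar τ)) :=
    tendsto_atTop_ciSup hAbarmono hAbdd
  set l := ⨆ τ, Abar τ with hldef
  have hlle : l ≤ (L 0) ^ 2 / (4 * π) := by
    refine ciSup_le fun τ => ?_
    exact flow_area_bound h hL (le_max_right _ _)
  have hAtend : Filter.Tendsto A Filter.atTop (nhds l) := by
    refine hAbartend.congr' ?_
    filter_upwards [Filter.eventually_ge_atTop (0:ℝ)] with τ hτ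
    rw [hAbar]
    simp only [max_eq_left hτ]
  have hAtend2 : Filter.Tendsto (fun τ => 2 * π * A τ) Filter.atTop (nhds (2 * π * l)) :=
    hAtend.const_mul _
  have hint : IntegrableOn I₀ (Set.Ioi 0) :=
    integrableOn_Ioi_deriv_of_nonneg hgc hg hgpos hAtend2
  refine ⟨hint, ?_⟩
  have hval : ∫ τ in Set.Ioi (0:ℝ), I₀ τ = 2 * π * l - 2 * π * A 0 :=
    integral_Ioi_of_hasDerivAt_of_tendsto hgc hg hint hAtend2
  rw [hval]
  have : 2 * π * l ≤ (L 0) ^ 2 / 2 := by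
    calc 2 * π * l ≤ 2 * π * ((L 0) ^ 2 / (4 * π)) := by
          exact mul_le_mul_of_nonneg_left hlle hπ.le
      _ = (L 0) ^ 2 / 2 := by field_simp; ring
  linarith
end
end
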